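/- For every critical pair s ≈ t of the transformed TRS R̄ there exist a constrained critical pair s′ ≈ t′ [φ′] of the LCTRS R and a substitution γ such that s = s′γ, t = t′γ and γ ⊨ φ′. -/

import Mathlib

namespace LCT

/-! ### First-order terms over signature `F` with natural-number variables -/

inductive Term (F : Type) : Type
  | var : ℕ → Term F
  | app : F → List (Term F) → Term F

instance {F : Type} : Inhabited (Term F) := ⟨Term.var 0⟩

namespace Term

variable {F : Type}

/-- Application of a substitution (total map from variables to terms). -/
def subst (σ : ℕ → Term F) : Term F → Term F
  | var x => σ x
  | app f ts => app f (ts.attach.map fun ⟨t, _⟩ => subst σ t)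

/-- The list of (occurrences of) variables of a term. -/
def varsList : Term F → List ℕ
  | var x => [x]
  | app _ ts => (ts.attach.map fun ⟨t, _⟩ => varsList t).flatten

/-- The set of variables of a term. -/
def vars (t : Term F) : Set ℕ := {x | x ∈ t.varsList}

/-- Number of occurrences of the variable `x` in a term. -/
def count (x : ℕ) : Term F → ℕ
  | var y => if y = x then 1 else 0
  | app _ ts => (ts.attach.map fun ⟨t, _⟩ => count x t).sum

/-- The subterm at a position (a position is a list of argument indices). -/
def subtermAt : Term F → List ℕ → Option (Term F)
  | t, [] => some t
  | var _, _ :: _ => none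
  | app _ ts, i :: p => match ts[i]? with
    | some t => subtermAt t p
    | none => none

/-- Replacement of the subterm at a position. -/
def replaceAt : Term F → List ℕ → Term F → Option (Term F)
  | _, [], u => some u
  | var _, _ :: _, _ => none
  | app f ts, i :: p, u => match ts[i]? with
    | some t => match replaceAt t p u with
      | some t' => some (app f (ts.set i t'))
      | none => none
    | none => none

/-- Renaming of variables. -/
def rename (π : ℕ → ℕ) (t : Term F) : Term F := t.subst (fun x => var (π x))

/-- The term is not a variable (i.e. its root is a function symbol). -/
def isFun : Term F → Prop
  | var _ => False
  | app _ _ => True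

end Term

/-- Simultaneous replacement at a list of (parallel) positions. -/
def replaceAll {F : Type} : Term F → List (List ℕ × Term F) → Option (Term F)
  | t, [] => some t
  | t, (p, u) :: rest => match t.replaceAt p u with
    | some t' => replaceAll t' rest
    | none => none

/-- Two positions are parallel if neither is a prefix of the other. -/
def ParallelPos (p q : List ℕ) : Prop := ¬ p <+: q ∧ ¬ q <+: p

/-- Prefix every position in the `i`-th member of `Qs` with `i` and collect the results. -/
def posJoin (Qs : List (List (List ℕ))) : List (List ℕ) :=
  (((List.range Qs.length).zip Qs).map fun iq => iq.2.map (iq.1 :: ·)).flatten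

/-- The domain of a substitution. -/
def Dom {F : Type} (σ : ℕ → Term F) : Set ℕ := {x | σ x ≠ Term.var x}

/-! ### Abstract rewriting notions -/

/-- Confluence of an abstract relation. -/
def Confluent {α : Type*} (r : α → α → Prop) : Prop :=
  ∀ s t u, Relation.ReflTransGen r s t → Relation.ReflTransGen r s u →
    ∃ v, Relation.ReflTransGen r t v ∧ Relation.ReflTransGen r u v

/-- Local confluence of an abstract relation. -/
def LocallyConfluent {α : Type*} (r : α → α → Prop) : Prop :=
  ∀ s t u, r s t → r s u →
    ∃ v, Relation.ReflTransGen r t v ∧ Relation.ReflTransGen r u v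

/-- Composition of relations. -/
def Comp {α : Type*} (r s : α → α → Prop) : α → α → Prop := fun a c => ∃ b, r a b ∧ s b c

/-! ### Constrained rewrite rules and LCTRSs -/

/-- A constrained rewrite rule `ℓ → r [φ]`. -/
structure Rule (F : Type) where
  lhs : Term F
  rhs : Term F
  cond : Term F

/-- The logical variables `LVar(ρ) = Var(φ) ∪ (Var(r) ∖ Var(ℓ))` of a rule. -/
def LVar {F : Type} (ρ : Rule F) : Set ℕ := ρ.cond.vars ∪ (ρ.rhs.vars \ ρ.lhs.vars)

/-- `EVar(ρ) = Var(r) ∖ (Var(ℓ) ∪ Var(φ))`, as a list. -/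
def EVarList {F : Type} (ρ : Rule F) : List ℕ :=
  ρ.rhs.varsList.filter fun x => !(ρ.lhs.varsList.contains x || ρ.cond.varsList.contains x)

/-- All variables of a rule. -/
def ruleVars {F : Type} (ρ : Rule F) : Set ℕ := ρ.lhs.vars ∪ ρ.rhs.vars ∪ ρ.cond.vars

/-- Terms all of whose function symbols are theory symbols (logical terms). -/
inductive IsLogical {F : Type} (Fth : Set F) : Term F → Prop
  | var (x : ℕ) : IsLogical Fth (.var x)
  | app {f ts} : f ∈ Fth → (∀ t ∈ ts, IsLogical Fth t) → IsLogical Fth (.app f ts)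

/-- A logically constrained term rewrite system (data part): a signature split into
term symbols `Fte` and theory symbols `Fth` with value constants `Val`, an arity
function, an interpretation `J` of ground logical terms, distinguished symbols
`tt` (the truth value ⊤), `andS` (conjunction) and `eqS` (equality), and a set
of constrained rewrite rules. -/
structure LCTRS (F : Type) where
  Fte : Set F
  Fth : Set F
  Val : Set F
  arity : F → ℕ
  J : Term F → F
  tt : F
  andS : F
  eqS : F
  rules : Set (Rule F)

namespace LCTRS

variable {F : Type}

/-- The term `t` is a value. -/
def isVal (R : LCTRS F) (t : Term F) : Prop := ∃ v ∈ R.Val, t = Term.app v []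

/-- `γ` assigns values to all variables in `S`. -/
def valAssign (R : LCTRS F) (S : Set ℕ) (γ : ℕ → Term F) : Prop := ∀ x ∈ S, R.isVal (γ x)

/-- A ground term (no variables). -/
def Ground (t : Term F) : Prop := t.varsList = []

/-- Validity of a constraint: `J(φγ) = ⊤` for every assignment of values to its variables. -/
def validC (R : LCTRS F) (φ : Term F) : Prop :=
  ∀ γ, R.valAssign φ.vars γ → R.J (φ.subst γ) = R.tt

/-- Satisfiability of a constraint. -/
def satC (R : LCTRS F) (φ : Term F) : Prop :=
  ∃ γ, R.valAssign φ.vars γ ∧ R.J (φ.subst γ) = R.tt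

/-- `γ ⊨ φ`: the substitution `γ` respects the constraint `φ`. -/
def respectsC (R : LCTRS F) (γ : ℕ → Term F) (φ : Term F) : Prop :=
  R.valAssign φ.vars γ ∧ R.validC (φ.subst γ)

/-- `σ ⊨ ρ`: the substitution `σ` respects the constrained rule `ρ`. -/
def respectsRule (R : LCTRS F) (σ : ℕ → Term F) (ρ : Rule F) : Prop :=
  Dom σ = ρ.lhs.vars ∪ ρ.rhs.vars ∪ ρ.cond.vars ∧
  (∀ x ∈ LVar ρ, R.isVal (σ x)) ∧ R.validC (ρ.cond.subst σ)

/-- Validity of the implication `φ ⇒ ψ`. -/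
def validImp (R : LCTRS F) (φ ψ : Term F) : Prop :=
  ∀ γ, R.valAssign (φ.vars ∪ ψ.vars) γ → R.J (φ.subst γ) = R.tt → R.J (ψ.subst γ) = R.tt

/-- The calculation rule `f(x₁,…,xₙ) → y [y = f(x₁,…,xₙ)]` for a theory symbol `f`. -/
def calcRule (R : LCTRS F) (f : F) : Rule F :=
  let xs : List (Term F) := (List.range (R.arity f)).map Term.var
  ⟨Term.app f xs, Term.var (R.arity f),
    Term.app R.eqS [Term.var (R.arity f), Term.app f xs]⟩

/-- `R_rc`: the rules of `R` together with all calculation rules. -/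
def Rrc (R : LCTRS F) : Set (Rule F) :=
  R.rules ∪ {ρ | ∃ f ∈ R.Fth \ R.Val, ρ = R.calcRule f}

/-- The conjunction `a ∧ b` as a logical term. -/
def conj (R : LCTRS F) (a b : Term F) : Term F := Term.app R.andS [a, b]

/-- The truth constant `⊤` as a logical term. -/
def trueT (R : LCTRS F) : Term F := Term.app R.tt []

/-- Conjunction of a list of constraints. -/
def bigConj (R : LCTRS F) (l : List (Term F)) : Term F := l.foldr R.conj R.trueT

/-- `EC_ρ`: the conjunction of `x = x` for all `x ∈ EVar(ρ)`. -/
def EC (R : LCTRS F) (ρ : Rule F) : Term F :=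
  R.bigConj ((EVarList ρ).map fun x => Term.app R.eqS [Term.var x, Term.var x])

/-- Well-formedness of an LCTRS: the axioms on the signature, values,
interpretation, the distinguished logical symbols, and the rules. -/
def WF (R : LCTRS F) : Prop :=
  R.Val ⊆ R.Fth ∧ R.Fte ∩ R.Fth ⊆ R.Val ∧ (∀ ι ∈ R.Val, R.arity ι = 0) ∧
  (∀ t, R.J t ∈ R.Val) ∧ (∀ v ∈ R.Val, R.J (Term.app v []) = v) ∧
  R.tt ∈ R.Val ∧ R.andS ∈ R.Fth \ R.Val ∧ R.arity R.andS = 2 ∧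
  R.eqS ∈ R.Fth \ R.Val ∧ R.arity R.eqS = 2 ∧
  (∀ a b : Term F, IsLogical R.Fth a → IsLogical R.Fth b → Ground a → Ground b →
    (R.J (R.conj a b) = R.tt ↔ (R.J a = R.tt ∧ R.J b = R.tt))) ∧
  (∀ a b : Term F, IsLogical R.Fth a → IsLogical R.Fth b → Ground a → Ground b →
    (R.J (Term.app R.eqS [a, b]) = R.tt ↔ R.J a = R.J b)) ∧
  (∀ ρ ∈ R.rules, (∃ f ts, ρ.lhs = Term.app f ts ∧ f ∈ R.Fte \ R.Fth) ∧
    IsLogical R.Fth ρ.cond)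

/-! ### Rewriting induced by an LCTRS -/

/-- One rewrite step at position `p`. -/
def rstepAt (R : LCTRS F) (p : List ℕ) (s t : Term F) : Prop :=
  ∃ ρ ∈ R.Rrc, ∃ σ, R.respectsRule σ ρ ∧
    s.subtermAt p = some (ρ.lhs.subst σ) ∧ s.replaceAt p (ρ.rhs.subst σ) = some t

/-- The rewrite relation `→_R`. -/
def rstep (R : LCTRS F) (s t : Term F) : Prop := ∃ p, R.rstepAt p s t

/-- A rewrite step at a position below (or equal to) `q`. -/
def rstepGe (R : LCTRS F) (q : List ℕ) (s t : Term F) : Prop :=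
  ∃ p, q <+: p ∧ R.rstepAt p s t

end LCTRS

/-! ### TRSs (unconstrained term rewrite systems) -/

/-- A TRS is a set of rules, i.e. pairs of terms. -/
abbrev TRS (F : Type) := Set (Term F × Term F)

/-- One rewrite step of a TRS at position `p`. -/
def tstepAt {F : Type} (S : TRS F) (p : List ℕ) (s t : Term F) : Prop :=
  ∃ lr ∈ S, ∃ σ : ℕ → Term F,
    s.subtermAt p = some (lr.1.subst σ) ∧ s.replaceAt p (lr.2.subst σ) = some t

/-- The rewrite relation of a TRS. -/
def tstep {F : Type} (S : TRS F) (s t : Term F) : Prop := ∃ p, tstepAt S p s t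

/-- A TRS is left-linear if no variable occurs twice in a left-hand side. -/
def LeftLinearTRS {F : Type} (S : TRS F) : Prop := ∀ lr ∈ S, ∀ x, lr.1.count x ≤ 1

/-! ### The transformed TRS `R̄` of an LCTRS -/

/-- The TRS `R̄`: all value instances `ℓτ → rτ` of constrained rules, together with
the calculation instances `f(v₁,…,vₙ) → J(f(v₁,…,vₙ))`. -/
def barTRS {F : Type} (R : LCTRS F) : TRS F :=
  {lr | ∃ ρ ∈ R.rules, ∃ τ : ℕ → Term F, Dom τ = LVar ρ ∧
      (∀ x ∈ LVar ρ, R.isVal (τ x)) ∧ R.validC (ρ.cond.subst τ) ∧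
      lr = (ρ.lhs.subst τ, ρ.rhs.subst τ)} ∪
  {lr | ∃ f ∈ R.Fth \ R.Val, ∃ vs : List F, vs.length = R.arity f ∧
      (∀ v ∈ vs, v ∈ R.Val) ∧
      lr = (Term.app f (vs.map fun v => Term.app v []),
            Term.app (R.J (Term.app f (vs.map fun v => Term.app v []))) [])}

/-! ### Generic multi-steps and parallel steps -/

/-- Generic multi-step relation over a set of constrained rules with a side
condition `Cond` on the rule and the matching substitution. -/
inductive MStepG {F : Type} (Rules : Set (Rule F)) (Cond : Rule F → (ℕ → Term F) → Prop) :
    Term F → Term F → Prop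
  | var (x : ℕ) : MStepG Rules Cond (.var x) (.var x)
  | app {f : F} {ss ts : List (Term F)} :
      List.Forall₂ (MStepG Rules Cond) ss ts → MStepG Rules Cond (.app f ss) (.app f ts)
  | rule {ρ : Rule F} {σ τ : ℕ → Term F} :
      ρ ∈ Rules → Cond ρ σ → (∀ x, MStepG Rules Cond (σ x) (τ x)) →
      MStepG Rules Cond (ρ.lhs.subst σ) (ρ.rhs.subst τ)

mutual
/-- Generic parallel rewriting, annotated with the list of (parallel) positions of
the contracted redexes; `Root` is the root-step relation. -/
inductive ParP {F : Type} (Root : Term F → Term F → Prop) :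
    List (List ℕ) → Term F → Term F → Prop
  | var (x : ℕ) : ParP Root [] (.var x) (.var x)
  | app {f : F} {Qs ss ts} : ParPs Root Qs ss ts →
      ParP Root (posJoin Qs) (.app f ss) (.app f ts)
  | rule {s t : Term F} : Root s t → ParP Root [[]] s t

inductive ParPs {F : Type} (Root : Term F → Term F → Prop) :
    List (List (List ℕ)) → List (Term F) → List (Term F) → Prop
  | nil : ParPs Root [] [] []
  | cons {Q s t Qs ss ts} : ParP Root Q s t → ParPs Root Qs ss ts →
      ParPs Root (Q :: Qs) (s :: ss) (t :: ts)
end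

/-- Root steps of a TRS. -/
def trootStep {F : Type} (S : TRS F) (s t : Term F) : Prop :=
  ∃ lr ∈ S, ∃ σ : ℕ → Term F, s = lr.1.subst σ ∧ t = lr.2.subst σ

/-- The parallel rewrite relation `⇉^Q` of a TRS. -/
def tparQ {F : Type} (S : TRS F) (Q : List (List ℕ)) : Term F → Term F → Prop :=
  ParP (trootStep S) Q

/-- The parallel rewrite relation `⇉` of a TRS. -/
def tpar {F : Type} (S : TRS F) (s t : Term F) : Prop := ∃ Q, tparQ S Q s t

/-- The multi-step relation `⊸→` of a TRS. -/
def tmstep {F : Type} (S : TRS F) : Term F → Term F → Prop :=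
  MStepG {ρ : Rule F | (ρ.lhs, ρ.rhs) ∈ S} (fun _ _ => True)

namespace LCTRS

variable {F : Type}

/-- Root steps of an LCTRS (on unconstrained terms). -/
def lrootStep (R : LCTRS F) (s t : Term F) : Prop :=
  ∃ ρ ∈ R.Rrc, ∃ σ, R.respectsRule σ ρ ∧ s = ρ.lhs.subst σ ∧ t = ρ.rhs.subst σ

/-- The parallel rewrite relation `⇉^Q` of an LCTRS on terms. -/
def lparQ (R : LCTRS F) (Q : List (List ℕ)) : Term F → Term F → Prop :=
  ParP R.lrootStep Q

/-- The parallel rewrite relation `⇉` of an LCTRS on terms. -/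
def lpar (R : LCTRS F) (s t : Term F) : Prop := ∃ Q, R.lparQ Q s t

/-- The multi-step relation `⊸→` of an LCTRS on terms. -/
def lmstep (R : LCTRS F) : Term F → Term F → Prop :=
  MStepG R.Rrc (fun ρ σ => R.respectsRule σ ρ)

/-! ### Constrained terms and rewriting on them -/

/-- Side condition for rewriting a constrained term with constraint `φ` using
rule `ρ` and substitution `σ`: `σ(x) ∈ Val ∪ Var(φ)` for logical variables,
`φ` is satisfiable and `φ ⇒ ψσ` is valid. -/
def ccond (R : LCTRS F) (φ : Term F) (ρ : Rule F) (σ : ℕ → Term F) : Prop :=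
  (∀ x ∈ LVar ρ, R.isVal (σ x) ∨ ∃ y ∈ φ.vars, σ x = Term.var y) ∧
  R.satC φ ∧ R.validImp φ (ρ.cond.subst σ)

/-- One step on a constrained term (the constraint `φ` is left unchanged) at position `p`. -/
def cstepAt (R : LCTRS F) (φ : Term F) (p : List ℕ) (s t : Term F) : Prop :=
  ∃ ρ ∈ R.Rrc, ∃ σ, R.ccond φ ρ σ ∧
    s.subtermAt p = some (ρ.lhs.subst σ) ∧ s.replaceAt p (ρ.rhs.subst σ) = some t

/-- A step on a constrained term at a position below (or equal to) `q`. -/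
def cstepGe (R : LCTRS F) (φ : Term F) (q : List ℕ) (s t : Term F) : Prop :=
  ∃ p, q <+: p ∧ R.cstepAt φ p s t

/-- Root steps on constrained terms with constraint `φ`. -/
def crootStep (R : LCTRS F) (φ : Term F) (s t : Term F) : Prop :=
  ∃ ρ ∈ R.Rrc, ∃ σ, R.ccond φ ρ σ ∧ s = ρ.lhs.subst σ ∧ t = ρ.rhs.subst σ

/-- The parallel relation `⇉^Q` on constrained terms (constraint unchanged). -/
def cparQ (R : LCTRS F) (φ : Term F) (Q : List (List ℕ)) : Term F → Term F → Prop :=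
  ParP (R.crootStep φ) Q

/-- The multi-step relation `⊸→` on constrained terms (constraint unchanged). -/
def cmstep (R : LCTRS F) (φ : Term F) : Term F → Term F → Prop :=
  MStepG R.Rrc (R.ccond φ)

/-- Equivalence `∼` of constrained terms (domains restricted to the constraint variables). -/
def simTerm (R : LCTRS F) (s φ t ψ : Term F) : Prop :=
  (∀ γ, R.respectsC γ φ → Dom γ = φ.vars →
    ∃ δ, R.respectsC δ ψ ∧ Dom δ = ψ.vars ∧ s.subst γ = t.subst δ) ∧
  (∀ δ, R.respectsC δ ψ → Dom δ = ψ.vars →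
    ∃ γ, R.respectsC γ φ ∧ Dom γ = φ.vars ∧ s.subst γ = t.subst δ)

/-- The equivalence `∼′` of constrained terms (unrestricted domains). -/
def simTerm' (R : LCTRS F) (s φ t ψ : Term F) : Prop :=
  (∀ γ, R.respectsC γ φ → ∃ δ, R.respectsC δ ψ ∧ s.subst γ = t.subst δ) ∧
  (∀ δ, R.respectsC δ ψ → ∃ γ, R.respectsC γ φ ∧ s.subst γ = t.subst δ)

end LCTRS

/-- A constrained pair `s ≈ t [φ]` (the constrained term with binary root `≈`). -/
abbrev CPair (F : Type) := Term F × Term F × Term F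

namespace LCTRS

variable {F : Type}

/-- Equivalence `∼` on constrained pairs `s ≈ t [φ]`. -/
def simPair (R : LCTRS F) (a b : CPair F) : Prop :=
  (∀ γ, R.respectsC γ a.2.2 → Dom γ = a.2.2.vars →
    ∃ δ, R.respectsC δ b.2.2 ∧ Dom δ = b.2.2.vars ∧
      a.1.subst γ = b.1.subst δ ∧ a.2.1.subst γ = b.2.1.subst δ) ∧
  (∀ δ, R.respectsC δ b.2.2 → Dom δ = b.2.2.vars →
    ∃ γ, R.respectsC γ a.2.2 ∧ Dom γ = a.2.2.vars ∧
      a.1.subst γ = b.1.subst δ ∧ a.2.1.subst γ = b.2.1.subst δ)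

/-- A raw rewrite step on the pair inside the first component, below position `1·q`. -/
def rawStepFstGe (R : LCTRS F) (q : List ℕ) (a b : CPair F) : Prop :=
  b.2.2 = a.2.2 ∧ b.2.1 = a.2.1 ∧ R.cstepGe a.2.2 q a.1 b.1

/-- A raw rewrite step on the pair inside the second component, below position `2·q`. -/
def rawStepSndGe (R : LCTRS F) (q : List ℕ) (a b : CPair F) : Prop :=
  b.2.2 = a.2.2 ∧ b.1 = a.1 ∧ R.cstepGe a.2.2 q a.2.1 b.2.1

/-- `~→_{≥1q}` on constrained pairs (`∼ · → · ∼`, step in the first component). -/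
def sstepFstGe (R : LCTRS F) (q : List ℕ) : CPair F → CPair F → Prop :=
  Comp R.simPair (Comp (R.rawStepFstGe q) R.simPair)

/-- `~→_{≥2q}` on constrained pairs (`∼ · → · ∼`, step in the second component). -/
def sstepSndGe (R : LCTRS F) (q : List ℕ) : CPair F → CPair F → Prop :=
  Comp R.simPair (Comp (R.rawStepSndGe q) R.simPair)

/-- A raw multi-step on the pair inside the first component. -/
def rawMStepFst (R : LCTRS F) (a b : CPair F) : Prop :=
  b.2.2 = a.2.2 ∧ b.2.1 = a.2.1 ∧ R.cmstep a.2.2 a.1 b.1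

/-- `~⊸→_{≥1}` on constrained pairs. -/
def smstepFst (R : LCTRS F) : CPair F → CPair F → Prop :=
  Comp R.simPair (Comp R.rawMStepFst R.simPair)

/-- A raw parallel step `⇉^P` on the pair inside the first component. -/
def rawParFst (R : LCTRS F) (P : List (List ℕ)) (a b : CPair F) : Prop :=
  b.2.2 = a.2.2 ∧ b.2.1 = a.2.1 ∧ R.cparQ a.2.2 P a.1 b.1

/-- A raw parallel step `⇉^Q` on the pair inside the second component. -/
def rawParSnd (R : LCTRS F) (Q : List (List ℕ)) (a b : CPair F) : Prop :=
  b.2.2 = a.2.2 ∧ b.1 = a.1 ∧ R.cparQ a.2.2 Q a.2.1 b.2.1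

/-- `~⇉_{≥1}^P` on constrained pairs. -/
def sparFst (R : LCTRS F) (P : List (List ℕ)) : CPair F → CPair F → Prop :=
  Comp R.simPair (Comp (R.rawParFst P) R.simPair)

/-- `~⇉_{≥2}^Q` on constrained pairs. -/
def sparSnd (R : LCTRS F) (Q : List (List ℕ)) : CPair F → CPair F → Prop :=
  Comp R.simPair (Comp (R.rawParSnd Q) R.simPair)

/-- A constrained pair `u ≈ v [ψ]` is trivial if `uσ = vσ` for every `σ ⊨ ψ`. -/
def TrivialC (R : LCTRS F) (u v ψ : Term F) : Prop :=
  ∀ σ, R.respectsC σ ψ → u.subst σ = v.subst σ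

end LCTRS

/-! ### Unification, variants, critical pairs -/

/-- `σ` unifies `s` and `t`. -/
def Unifies {F : Type} (σ : ℕ → Term F) (s t : Term F) : Prop := s.subst σ = t.subst σ

/-- `σ` is a most general unifier of `s` and `t`. -/
def IsMGU {F : Type} (σ : ℕ → Term F) (s t : Term F) : Prop :=
  Unifies σ s t ∧ ∀ θ, Unifies θ s t → ∃ δ, ∀ x, (σ x).subst δ = θ x

/-- `(ℓ₂, r₂)` is a variant (bijective renaming) of `(ℓ₁, r₁)`. -/
def IsVariantP {F : Type} (a b : Term F × Term F) : Prop :=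
  ∃ π : ℕ ≃ ℕ, b.1 = a.1.rename π ∧ b.2 = a.2.rename π

/-- `ρ₂` is a variant (bijective renaming) of the constrained rule `ρ₁`. -/
def IsVariantR {F : Type} (a b : Rule F) : Prop :=
  ∃ π : ℕ ≃ ℕ, b.lhs = a.lhs.rename π ∧ b.rhs = a.rhs.rename π ∧ b.cond = a.cond.rename π

/-- `s ≈ t` is a critical pair of the TRS `S` obtained from an overlap at position `p`. -/
def IsCPAt {F : Type} (S : TRS F) (p : List ℕ) (s t : Term F) : Prop :=
  ∃ (l₁ r₁ l₂ r₂ : Term F) (σ : ℕ → Term F) (l2p : Term F),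
    (∃ lr ∈ S, IsVariantP lr (l₁, r₁)) ∧
    (∃ lr ∈ S, IsVariantP lr (l₂, r₂)) ∧
    (l₁.vars ∪ r₁.vars) ∩ (l₂.vars ∪ r₂.vars) = ∅ ∧
    l₂.subtermAt p = some l2p ∧ l2p.isFun ∧
    IsMGU σ l₁ l2p ∧
    (p = [] → ¬ IsVariantP (l₁, r₁) (l₂, r₂)) ∧
    (l₂.subst σ).replaceAt p (r₁.subst σ) = some s ∧
    t = r₂.subst σ

/-- `s ≈ t [φc]` is a constrained critical pair of the LCTRS `R` obtained from an
overlap at position `p`. -/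
def IsCCPAt {F : Type} (R : LCTRS F) (p : List ℕ) (s t φc : Term F) : Prop :=
  ∃ (ρ₁ ρ₂ : Rule F) (σ : ℕ → Term F) (l2p : Term F),
    (∃ ρ ∈ R.Rrc, IsVariantR ρ ρ₁) ∧
    (∃ ρ ∈ R.Rrc, IsVariantR ρ ρ₂) ∧
    ruleVars ρ₁ ∩ ruleVars ρ₂ = ∅ ∧
    ρ₂.lhs.subtermAt p = some l2p ∧ l2p.isFun ∧
    IsMGU σ ρ₁.lhs l2p ∧
    (∀ x ∈ LVar ρ₁ ∪ LVar ρ₂, R.isVal (σ x) ∨ ∃ y, σ x = Term.var y) ∧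
    R.satC (R.conj (ρ₁.cond.subst σ) (ρ₂.cond.subst σ)) ∧
    (p = [] → ¬ IsVariantR ρ₁ ρ₂ ∨ ¬ (ρ₁.rhs.vars ⊆ ρ₁.lhs.vars)) ∧
    (ρ₂.lhs.subst σ).replaceAt p (ρ₁.rhs.subst σ) = some s ∧
    t = ρ₂.rhs.subst σ ∧
    φc = R.conj (ρ₁.cond.subst σ)
           (R.conj (ρ₂.cond.subst σ) ((R.conj (R.EC ρ₁) (R.EC ρ₂)).subst σ))

/-- `s ≈ t` is a parallel critical pair of the TRS `S`: `Ps` is the list of parallel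
overlap positions and `lsig` is the instantiated left-hand side `ℓσ`. -/
def IsPCP {F : Type} (S : TRS F) (Ps : List (List ℕ)) (lsig s t : Term F) : Prop :=
  ∃ (l r : Term F) (prs : List (List ℕ × Term F × Term F)) (σ : ℕ → Term F),
    Ps = prs.map (·.1) ∧ Ps ≠ [] ∧ Ps.Pairwise ParallelPos ∧
    (∃ lr ∈ S, IsVariantP lr (l, r)) ∧
    (∀ pr ∈ prs, ∃ lr ∈ S, IsVariantP lr pr.2) ∧
    prs.Pairwise (fun a b =>
      (a.2.1.vars ∪ a.2.2.vars) ∩ (b.2.1.vars ∪ b.2.2.vars) = ∅) ∧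
    (∀ pr ∈ prs, (l.vars ∪ r.vars) ∩ (pr.2.1.vars ∪ pr.2.2.vars) = ∅) ∧
    (∀ pr ∈ prs, ∃ u, l.subtermAt pr.1 = some u ∧ u.isFun) ∧
    (∀ pr ∈ prs, ∀ u, l.subtermAt pr.1 = some u → Unifies σ pr.2.1 u) ∧
    (∀ θ : ℕ → Term F, (∀ pr ∈ prs, ∀ u, l.subtermAt pr.1 = some u → Unifies θ pr.2.1 u) →
      ∃ δ, ∀ x, (σ x).subst δ = θ x) ∧
    (∀ lp rp, prs = [([], lp, rp)] → ¬ IsVariantP (lp, rp) (l, r)) ∧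
    lsig = l.subst σ ∧
    replaceAll lsig (prs.map fun pr => (pr.1, pr.2.2.subst σ)) = some s ∧
    t = r.subst σ

/-- `s ≈ t [Φ]` is a constrained parallel critical pair of the LCTRS `R`: `Ps` is the
list of parallel overlap positions and `lsig` is the instantiated left-hand side `ℓσ`. -/
def IsCPCP {F : Type} (R : LCTRS F) (Ps : List (List ℕ)) (lsig s t Φ : Term F) : Prop :=
  ∃ (ρ : Rule F) (prs : List (List ℕ × Rule F)) (σ : ℕ → Term F),
    Ps = prs.map (·.1) ∧ Ps ≠ [] ∧ Ps.Pairwise ParallelPos ∧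
    (∃ ρ' ∈ R.Rrc, IsVariantR ρ' ρ) ∧
    (∀ pr ∈ prs, ∃ ρ' ∈ R.Rrc, IsVariantR ρ' pr.2) ∧
    prs.Pairwise (fun a b => ruleVars a.2 ∩ ruleVars b.2 = ∅) ∧
    (∀ pr ∈ prs, ruleVars ρ ∩ ruleVars pr.2 = ∅) ∧
    (∀ pr ∈ prs, ∃ u, ρ.lhs.subtermAt pr.1 = some u ∧ u.isFun) ∧
    (∀ pr ∈ prs, ∀ u, ρ.lhs.subtermAt pr.1 = some u → Unifies σ pr.2.lhs u) ∧
    (∀ θ : ℕ → Term F,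
      (∀ pr ∈ prs, ∀ u, ρ.lhs.subtermAt pr.1 = some u → Unifies θ pr.2.lhs u) →
      ∃ δ, ∀ x, (σ x).subst δ = θ x) ∧
    (∀ x, (x ∈ LVar ρ ∨ ∃ pr ∈ prs, x ∈ LVar pr.2) →
      R.isVal (σ x) ∨ ∃ y, σ x = Term.var y) ∧
    R.satC (R.conj (ρ.cond.subst σ) (R.bigConj (prs.map fun pr => pr.2.cond.subst σ))) ∧
    (∀ ρε, prs = [([], ρε)] → ¬ IsVariantR ρε ρ ∨ ¬ (ρ.rhs.vars ⊆ ρ.lhs.vars)) ∧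
    lsig = ρ.lhs.subst σ ∧
    replaceAll lsig (prs.map fun pr => (pr.1, pr.2.rhs.subst σ)) = some s ∧
    t = ρ.rhs.subst σ ∧
    Φ = R.conj (ρ.cond.subst σ)
          (R.conj ((R.conj (R.EC ρ) (R.bigConj (prs.map fun pr => R.EC pr.2))).subst σ)
            (R.bigConj (prs.map fun pr => pr.2.cond.subst σ)))

/-- `Var(t, P)`: the variables occurring in subterms of `t` at positions in `P`. -/
def VarsBelow {F : Type} (t : Term F) (P : List (List ℕ)) : Set ℕ :=
  {x | ∃ p ∈ P, ∃ u, t.subtermAt p = some u ∧ x ∈ u.vars}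

/-- `TVar(t, φ, P)`: the non-logical variables (w.r.t. `φ`) in subterms of `t` at
positions in `P`. -/
def TVarsBelow {F : Type} (t φ : Term F) (P : List (List ℕ)) : Set ℕ :=
  {x | ∃ p ∈ P, ∃ u, t.subtermAt p = some u ∧ x ∈ u.vars ∧ x ∉ φ.vars}

/-! ### Closedness conditions -/

namespace LCTRS

variable {F : Type}

/-- A constrained critical pair `s ≈ t [φ]` is development closed. -/
def DevClosedC (R : LCTRS F) (s t φ : Term F) : Prop :=
  ∃ u v ψ, R.smstepFst (s, t, φ) (u, v, ψ) ∧ R.TrivialC u v ψ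

/-- A constrained critical pair (from an overlap at position `p`) is almost
development closed. -/
def AlmostDevClosedC (R : LCTRS F) (p : List ℕ) (s t φ : Term F) : Prop :=
  (p ≠ [] → R.DevClosedC s t φ) ∧
  (p = [] → ∃ a u v ψ, R.smstepFst (s, t, φ) a ∧
    Relation.ReflTransGen (R.sstepSndGe []) a (u, v, ψ) ∧ R.TrivialC u v ψ)

/-- An LCTRS is almost development closed. -/
def AlmostDevClosedLCTRS (R : LCTRS F) : Prop :=
  ∀ p s t φ, IsCCPAt R p s t φ → R.AlmostDevClosedC p s t φ

/-- A constrained critical pair `s ≈ t [φ]` is 1-parallel closed. -/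
def OnePCc (R : LCTRS F) (s t φ : Term F) : Prop :=
  ∃ P a u v ψ, R.sparFst P (s, t, φ) a ∧
    Relation.ReflTransGen (R.sstepSndGe []) a (u, v, ψ) ∧ R.TrivialC u v ψ

/-- A constrained parallel critical pair is 2-parallel closed. -/
def TwoPCc (R : LCTRS F) (Ps : List (List ℕ)) (lsig s t Φ : Term F) : Prop :=
  ∃ Q a u v ψ, R.sparSnd Q (s, t, Φ) a ∧
    Relation.ReflTransGen (R.sstepFstGe []) a (u, v, ψ) ∧ R.TrivialC u v ψ ∧
    TVarsBelow v ψ Q ⊆ TVarsBelow lsig Φ Ps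

/-- An LCTRS is parallel closed. -/
def ParallelClosedLCTRS (R : LCTRS F) : Prop :=
  (∀ p s t φ, IsCCPAt R p s t φ → R.OnePCc s t φ) ∧
  (∀ Ps lsig s t Φ, IsCPCP R Ps lsig s t Φ → R.TwoPCc Ps lsig s t Φ)

/-- Linearity of the left-hand sides in the non-logical variables (this is all that
is needed for left-linearity of the transformed TRS). -/
def LeftLinearOutsideLVar (R : LCTRS F) : Prop :=
  ∀ ρ ∈ R.rules, ∀ x, x ∉ LVar ρ → ρ.lhs.count x ≤ 1

end LCTRS

/-- A TRS is almost development closed. -/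
def AlmostDevClosedTRS {F : Type} (S : TRS F) : Prop :=
  ∀ p s t, IsCPAt S p s t →
    (p ≠ [] → tmstep S s t) ∧
    (p = [] → ∃ w, tmstep S s w ∧ Relation.ReflTransGen (tstep S) t w)

/-- A TRS is 1-parallel closed. -/
def OnePCTRS {F : Type} (S : TRS F) : Prop :=
  ∀ p s t, IsCPAt S p s t → ∃ w, tpar S s w ∧ Relation.ReflTransGen (tstep S) t w

/-- A TRS is 2-parallel closed. -/
def TwoPCTRS {F : Type} (S : TRS F) : Prop :=
  ∀ Ps lsig s t, IsPCP S Ps lsig s t →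
    ∃ v Q, Relation.ReflTransGen (tstep S) s v ∧ tparQ S Q t v ∧
      VarsBelow v Q ⊆ VarsBelow lsig Ps

/-- A TRS is parallel closed. -/
def ParallelClosedTRS {F : Type} (S : TRS F) : Prop := OnePCTRS S ∧ TwoPCTRS S

section Aux

variable {F : Type}

namespace Term

@[elab_as_elim] theorem my_ind {P : Term F → Prop} (hv : ∀ x, P (.var x))
    (ha : ∀ f ts, (∀ t ∈ ts, P t) → P (.app f ts)) : ∀ t, P t
  | .var x => hv x
  | .app f ts => ha f ts (fun t ht => my_ind hv ha t)
termination_by t => sizeOf t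
decreasing_by simp_wf; exact Nat.lt_trans (List.sizeOf_lt_of_mem ht) (by simp)

@[simp] theorem subst_app (σ : ℕ → Term F) (f : F) (ts : List (Term F)) :
    (Term.app f ts).subst σ = Term.app f (ts.map (Term.subst σ)) := by
  rw [Term.subst]; congr 1; simp [List.attach_map_subtype_val]

@[simp] theorem subst_var (σ : ℕ → Term F) (x : ℕ) :
    (Term.var x : Term F).subst σ = σ x := by rw [Term.subst]

@[simp] theorem varsList_app (f : F) (ts : List (Term F)) :
    (Term.app f ts).varsList = (ts.map Term.varsList).flatten := by
  rw [Term.varsList]; congr 1; simp [List.attach_map_subtype_val]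

@[simp] theorem varsList_var (x : ℕ) : (Term.var x : Term F).varsList = [x] := by
  rw [Term.varsList]

theorem subst_subst (σ δ : ℕ → Term F) (t : Term F) :
    (t.subst σ).subst δ = t.subst (fun x => (σ x).subst δ) := by
  induction t using my_ind with
  | hv x => simp
  | ha f ts ih => simp [List.map_map]; exact fun t ht => ih t ht

theorem subst_congr {σ δ : ℕ → Term F} {t : Term F}
    (h : ∀ x ∈ t.varsList, σ x = δ x) : t.subst σ = t.subst δ := by
  induction t using my_ind with
  | hv x => simpa using h x (by simp)
  | ha f ts ih =>
    simp only [subst_app]; congr 1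
    exact List.map_congr_left fun u hu => ih u hu (fun x hx => h x (by
      simp only [varsList_app, List.mem_flatten]; exact ⟨u.varsList, List.mem_map_of_mem hu, hx⟩))

@[simp] theorem subst_id (t : Term F) : t.subst Term.var = t := by
  induction t using my_ind with
  | hv x => simp
  | ha f ts ih => simp only [subst_app]; congr 1; simpa using List.map_congr_left ih

theorem subst_ground {t : Term F} (h : t.varsList = []) (σ : ℕ → Term F) :
    t.subst σ = t := by
  rw [show t.subst σ = t.subst Term.var from subst_congr (fun x hx => by simp [h] at hx)]
  exact subst_id t

private theorem flatten_flatMap (L : List (List ℕ)) (f : ℕ → List ℕ) :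
    L.flatten.flatMap f = (L.map (fun l => l.flatMap f)).flatten := by
  induction L with
  | nil => simp
  | cons a l ih => simp [ih]

theorem varsList_subst (σ : ℕ → Term F) (t : Term F) :
    (t.subst σ).varsList = t.varsList.flatMap (fun x => (σ x).varsList) := by
  induction t using my_ind with
  | hv x => simp
  | ha f ts ih =>
    simp only [subst_app, varsList_app, List.map_map, flatten_flatMap, List.map_map]
    congr 1
    exact List.map_congr_left fun u hu => ih u hu

theorem mem_vars_subst {σ : ℕ → Term F} {t : Term F} {y : ℕ} :
    y ∈ (t.subst σ).varsList ↔ ∃ x ∈ t.varsList, y ∈ (σ x).varsList := by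
  simp [varsList_subst]

end Term

end Aux
section Aux2

variable {F : Type}

namespace Term

theorem subst_eq_pointwise {σ δ : ℕ → Term F} {t : Term F}
    (h : t.subst σ = t.subst δ) : ∀ x ∈ t.varsList, σ x = δ x := by
  induction t using my_ind with
  | hv x => intro y hy; simp at hy h; subst hy; exact h
  | ha f ts ih =>
    intro y hy
    simp only [subst_app, Term.app.injEq, true_and] at h
    simp only [varsList_app, List.mem_flatten, List.mem_map] at hy
    obtain ⟨_, ⟨u, hu, rfl⟩, hyu⟩ := hy
    have := List.map_inj_left.mp h u hu
    exact ih u hu this y hyu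

@[simp] theorem subtermAt_nil (t : Term F) : t.subtermAt [] = some t := by
  cases t <;> rw [Term.subtermAt]

@[simp] theorem subtermAt_var_cons (x i : ℕ) (p : List ℕ) :
    (Term.var x : Term F).subtermAt (i :: p) = none := by rw [Term.subtermAt]

theorem subtermAt_app_cons (f : F) (ts : List (Term F)) (i : ℕ) (p : List ℕ) :
    (Term.app f ts).subtermAt (i :: p) = (ts[i]?).bind (fun u => u.subtermAt p) := by
  rw [Term.subtermAt]; cases ts[i]? <;> simp

@[simp] theorem replaceAt_nil (t u : Term F) : t.replaceAt [] u = some u := by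
  cases t <;> rw [Term.replaceAt]

@[simp] theorem replaceAt_var_cons (x i : ℕ) (p : List ℕ) (u : Term F) :
    (Term.var x : Term F).replaceAt (i :: p) u = none := by rw [Term.replaceAt]

theorem replaceAt_app_cons (f : F) (ts : List (Term F)) (i : ℕ) (p : List ℕ) (u : Term F) :
    (Term.app f ts).replaceAt (i :: p) u =
      (ts[i]?).bind (fun t => (t.replaceAt p u).map (fun t' => Term.app f (ts.set i t'))) := by
  rw [Term.replaceAt]
  cases hts : ts[i]? with
  | none => simp
  | some t => cases htp : t.replaceAt p u <;> simp [htp]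

theorem subtermAt_subst {t u : Term F} {p : List ℕ} (σ : ℕ → Term F)
    (h : t.subtermAt p = some u) : (t.subst σ).subtermAt p = some (u.subst σ) := by
  induction p generalizing t with
  | nil => simp_all
  | cons i p ih =>
    cases t with
    | var x => simp at h
    | app f ts =>
      rw [subtermAt_app_cons] at h
      cases hts : ts[i]? with
      | none => simp [hts] at h
      | some w =>
        simp only [hts, Option.bind_some] at h
        simp only [subst_app, subtermAt_app_cons, List.getElem?_map, hts, Option.map_some,
          Option.bind_some]
        exact ih (t := w) h

theorem subtermAt_varsList {t u : Term F} {p : List ℕ}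
    (h : t.subtermAt p = some u) : ∀ x ∈ u.varsList, x ∈ t.varsList := by
  induction p generalizing t with
  | nil => simp_all
  | cons i p ih =>
    cases t with
    | var x => simp at h
    | app f ts =>
      rw [subtermAt_app_cons] at h
      cases hts : ts[i]? with
      | none => simp [hts] at h
      | some w =>
        simp only [hts, Option.bind_some] at h
        intro x hx
        have hw : w ∈ ts := List.mem_of_getElem? hts
        have := ih (t := w) h x hx
        simp only [varsList_app, List.mem_flatten, List.mem_map]
        exact ⟨w.varsList, ⟨w, hw, rfl⟩, this⟩

/-- Lifting positions through a variable-or-value substitution. -/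
theorem subtermAt_subst_varval {σ : ℕ → Term F}
    (hσ : ∀ x, (∃ y, σ x = Term.var y) ∨ ∃ v, σ x = Term.app v []) :
    ∀ {p : List ℕ} {t w : Term F}, (t.subst σ).subtermAt p = some w →
      ∃ u, t.subtermAt p = some u ∧ w = u.subst σ := by
  intro p
  induction p with
  | nil => intro t w h; simp at h; exact ⟨t, by simp, h.symm⟩
  | cons i p ih =>
    intro t w h
    cases t with
    | var x =>
      rcases hσ x with ⟨y, hy⟩ | ⟨v, hv⟩
      · rw [subst_var, hy, subtermAt_var_cons] at h; exact absurd h (by simp)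
      · rw [subst_var, hv, subtermAt_app_cons] at h; simp at h
    | app f ts =>
      simp only [subst_app, subtermAt_app_cons, List.getElem?_map] at h
      cases hts : ts[i]? with
      | none => simp [hts] at h
      | some u =>
        simp only [hts, Option.map_some, Option.bind_some] at h
        obtain ⟨u', hu', rfl⟩ := ih h
        exact ⟨u', by rw [subtermAt_app_cons, hts, Option.bind_some]; exact hu', rfl⟩

theorem replaceAt_exists {t u : Term F} {p : List ℕ} (h : t.subtermAt p = some u)
    (w : Term F) : ∃ t', t.replaceAt p w = some t' := by
  induction p generalizing t with
  | nil => exact ⟨w, by simp⟩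
  | cons i p ih =>
    cases t with
    | var x => simp at h
    | app f ts =>
      rw [subtermAt_app_cons] at h
      cases hts : ts[i]? with
      | none => simp [hts] at h
      | some v =>
        simp only [hts, Option.bind_some] at h
        obtain ⟨t', ht'⟩ := ih (t := v) h
        exact ⟨Term.app f (ts.set i t'), by
          rw [replaceAt_app_cons, hts, Option.bind_some, ht', Option.map_some]⟩

theorem replaceAt_subst {t w t' : Term F} {p : List ℕ} (σ : ℕ → Term F)
    (h : t.replaceAt p w = some t') :
    (t.subst σ).replaceAt p (w.subst σ) = some (t'.subst σ) := by
  induction p generalizing t t' with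
  | nil =>
    simp only [replaceAt_nil, Option.some.injEq] at h
    subst h; simp
  | cons i p ih =>
    cases t with
    | var x => simp at h
    | app f ts =>
      rw [replaceAt_app_cons] at h
      cases hts : ts[i]? with
      | none => simp [hts] at h
      | some v =>
        simp only [hts, Option.bind_some] at h
        cases hrep : v.replaceAt p w with
        | none => simp [hrep] at h
        | some v' =>
          simp only [hrep, Option.map_some, Option.some.injEq] at h
          subst h
          simp only [subst_app, replaceAt_app_cons, List.getElem?_map, hts, Option.map_some,
            Option.bind_some, ih (t := v) hrep, List.map_set]

end Term

end Aux2
section Unification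

variable {F : Type}

namespace Term

/-- Size of a term. -/
def size : Term F → ℕ
  | var _ => 1
  | app _ ts => 1 + (ts.attach.map fun ⟨t, _⟩ => size t).sum

@[simp] theorem size_var (x : ℕ) : (Term.var x : Term F).size = 1 := by rw [Term.size]

@[simp] theorem size_app (f : F) (ts : List (Term F)) :
    (Term.app f ts).size = 1 + (ts.map Term.size).sum := by
  rw [Term.size]; congr 1; simp [List.attach_map_subtype_val]

theorem size_pos (t : Term F) : 1 ≤ t.size := by
  cases t <;> simp

theorem size_le_subst {x : ℕ} {t : Term F} (h : x ∈ t.varsList) (σ : ℕ → Term F) :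
    (σ x).size ≤ (t.subst σ).size := by
  induction t using my_ind with
  | hv y => simp at h; subst h; simp
  | ha f ts ih =>
    simp only [varsList_app, List.mem_flatten, List.mem_map] at h
    obtain ⟨_, ⟨u, hu, rfl⟩, hx⟩ := h
    have h1 := ih u hu hx
    have h2 : (u.subst σ).size ≤ ((Term.app f ts).subst σ).size := by
      simp only [subst_app, size_app]
      have : (u.subst σ).size ∈ (ts.map (Term.subst σ)).map Term.size := by
        simp only [List.map_map, List.mem_map]; exact ⟨u, hu, rfl⟩
      have := List.single_le_sum (by intro a _; exact Nat.zero_le a) _ this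
      omega
    omega

theorem size_lt_subst {x : ℕ} {t : Term F} (h : x ∈ t.varsList)
    (hne : ∀ y, t ≠ Term.var y) (σ : ℕ → Term F) :
    (σ x).size < (t.subst σ).size := by
  cases t with
  | var y => exact absurd rfl (hne y)
  | app f ts =>
    simp only [varsList_app, List.mem_flatten, List.mem_map] at h
    obtain ⟨_, ⟨u, hu, rfl⟩, hx⟩ := h
    have h1 := size_le_subst hx σ
    have : (u.subst σ).size ∈ (ts.map (Term.subst σ)).map Term.size := by
      simp only [List.map_map, List.mem_map]; exact ⟨u, hu, rfl⟩
    have h2 := List.single_le_sum (by intro a _; exact Nat.zero_le a) _ this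
    simp only [subst_app, size_app]
    omega

end Term

/-- Substitution binding a single variable. -/
def single (x : ℕ) (t : Term F) : ℕ → Term F := fun y => if y = x then t else Term.var y

@[simp] theorem single_same (x : ℕ) (t : Term F) : single x t x = t := by simp [single]

theorem single_other {x y : ℕ} (h : y ≠ x) (t : Term F) : single x t y = Term.var y := by
  simp [single, h]

theorem single_subst_eq {θ : ℕ → Term F} {x : ℕ} {t : Term F} (h : θ x = t.subst θ) :
    ∀ y, (single x t y).subst θ = θ y := by
  intro y
  by_cases hy : y = x
  · subst hy; simp [h]
  · rw [single_other hy]; simp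

/-- A list of equations. -/
abbrev Eqs (F : Type) := List (Term F × Term F)

def sizeE (E : Eqs F) : ℕ := (E.map fun pr => pr.1.size + pr.2.size).sum

def varsE (E : Eqs F) : List ℕ := (E.map fun pr => pr.1.varsList ++ pr.2.varsList).flatten

theorem mem_varsE {y : ℕ} {E : Eqs F} :
    y ∈ varsE E ↔ ∃ pr ∈ E, y ∈ pr.1.varsList ∨ y ∈ pr.2.varsList := by
  simp only [varsE, List.mem_flatten, List.mem_map]
  constructor
  · rintro ⟨_, ⟨pr, hpr, rfl⟩, hy⟩
    exact ⟨pr, hpr, by simpa using hy⟩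
  · rintro ⟨pr, hpr, hy⟩
    exact ⟨_, ⟨pr, hpr, rfl⟩, by simpa using hy⟩

@[simp] theorem sizeE_cons (pr : Term F × Term F) (E : Eqs F) :
    sizeE (pr :: E) = pr.1.size + pr.2.size + sizeE E := by simp [sizeE]

@[simp] theorem sizeE_append (E E' : Eqs F) : sizeE (E ++ E') = sizeE E + sizeE E' := by
  simp [sizeE]

def substE (x : ℕ) (t : Term F) (E : Eqs F) : Eqs F :=
  E.map fun pr => (pr.1.subst (single x t), pr.2.subst (single x t))

variable [DecidableEq F]

def unify : ℕ → Eqs F → Option (List (ℕ × Term F))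
  | 0, _ => none
  | _ + 1, [] => some []
  | n + 1, (Term.var x, Term.var y) :: E =>
      if x = y then unify n E
      else (unify n (substE x (Term.var y) E)).map (fun bs => (x, Term.var y) :: bs)
  | n + 1, (Term.var x, Term.app g ts) :: E =>
      if x ∈ (Term.app g ts : Term F).varsList then none
      else (unify n (substE x (Term.app g ts) E)).map (fun bs => (x, Term.app g ts) :: bs)
  | n + 1, (Term.app f ss, Term.var x) :: E =>
      if x ∈ (Term.app f ss : Term F).varsList then none
      else (unify n (substE x (Term.app f ss) E)).map (fun bs => (x, Term.app f ss) :: bs)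
  | n + 1, (Term.app f ss, Term.app g ts) :: E =>
      if f = g ∧ ss.length = ts.length then unify n (ss.zip ts ++ E) else none

def toSub : List (ℕ × Term F) → ℕ → Term F
  | [] => Term.var
  | (x, t) :: bs => fun y => (single x t y).subst (toSub bs)

theorem zip_eq_of_map_eq {σ : ℕ → Term F} :
    ∀ {ss ts : List (Term F)}, ss.map (Term.subst σ) = ts.map (Term.subst σ) →
      ∀ pr ∈ ss.zip ts, pr.1.subst σ = pr.2.subst σ := by
  intro ss
  induction ss with
  | nil => intro ts h pr hpr; simp at hpr
  | cons a l ih =>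
    intro ts h pr hpr
    cases ts with
    | nil => simp at hpr
    | cons b m =>
      simp only [List.map_cons, List.cons.injEq] at h
      rcases List.mem_cons.mp hpr with rfl | hpr'
      · exact h.1
      · exact ih h.2 pr hpr'

theorem map_eq_of_zip {σ : ℕ → Term F} :
    ∀ {ss ts : List (Term F)}, ss.length = ts.length →
      (∀ pr ∈ ss.zip ts, pr.1.subst σ = pr.2.subst σ) →
      ss.map (Term.subst σ) = ts.map (Term.subst σ) := by
  intro ss
  induction ss with
  | nil => intro ts h _; cases ts with | nil => rfl | cons => simp at h
  | cons a l ih =>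
    intro ts h hz
    cases ts with
    | nil => simp at h
    | cons b m =>
      simp only [List.map_cons, List.cons.injEq]
      exact ⟨hz (a, b) (by simp), ih (by simpa using h) (fun pr hpr => hz pr (by simp [hpr]))⟩

theorem unify_sound :
    ∀ (n : ℕ) (E : Eqs F) (bs : List (ℕ × Term F)), unify n E = some bs →
      ∀ pr ∈ E, pr.1.subst (toSub bs) = pr.2.subst (toSub bs) := by
  intro n
  induction n with
  | zero => intro E bs h; simp [unify] at h
  | succ n ih =>
    intro E bs h pr hpr
    match E, hpr with
    | (s, t) :: E', hpr =>
      match s, t with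
      | Term.var x, Term.var y =>
        by_cases hxy : x = y
        · subst hxy
          rw [unify, if_pos rfl] at h
          rcases List.mem_cons.mp hpr with rfl | hpr'
          · rfl
          · exact ih E' bs h pr hpr'
        · rw [unify, if_neg hxy] at h
          cases hu : unify n (substE x (Term.var y) E') with
          | none => rw [hu] at h; simp at h
          | some bs' =>
            rw [hu] at h; simp only [Option.map_some, Option.some.injEq] at h
            subst h
            have hfact : ∀ u : Term F,
                u.subst (toSub ((x, Term.var y) :: bs')) =
                  (u.subst (single x (Term.var y))).subst (toSub bs') := by
              intro u; rw [Term.subst_subst]; rfl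
            rcases List.mem_cons.mp hpr with rfl | hpr'
            · show (Term.var x).subst _ = (Term.var y).subst _
              rw [hfact, hfact]
              simp [single, hxy]
            · have := ih _ bs' hu (pr.1.subst (single x (Term.var y)),
                pr.2.subst (single x (Term.var y)))
                (by simp only [substE, List.mem_map]; exact ⟨pr, hpr', rfl⟩)
              rw [hfact, hfact]
              exact this
      | Term.var x, Term.app g ts =>
        rw [unify] at h
        by_cases hocc : x ∈ (Term.app g ts : Term F).varsList
        · rw [if_pos hocc] at h; simp at h
        · rw [if_neg hocc] at h
          cases hu : unify n (substE x (Term.app g ts) E') with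
          | none => rw [hu] at h; simp at h
          | some bs' =>
            rw [hu] at h; simp only [Option.map_some, Option.some.injEq] at h
            subst h
            have hfact : ∀ u : Term F,
                u.subst (toSub ((x, Term.app g ts) :: bs')) =
                  (u.subst (single x (Term.app g ts))).subst (toSub bs') := by
              intro u; rw [Term.subst_subst]; rfl
            rcases List.mem_cons.mp hpr with rfl | hpr'
            · show (Term.var x).subst _ = (Term.app g ts).subst _
              rw [hfact, hfact]
              congr 1
              simp only [Term.subst_var, single_same]
              exact (Term.subst_congr (fun z hz => single_other (fun hzx => hocc (by rw [← hzx]; exact hz)) _)).trans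
                (Term.subst_id _) |>.symm
            · have := ih _ bs' hu (pr.1.subst (single x (Term.app g ts)),
                pr.2.subst (single x (Term.app g ts)))
                (by simp only [substE, List.mem_map]; exact ⟨pr, hpr', rfl⟩)
              rw [hfact, hfact]
              exact this
      | Term.app f ss, Term.var x =>
        rw [unify] at h
        by_cases hocc : x ∈ (Term.app f ss : Term F).varsList
        · rw [if_pos hocc] at h; simp at h
        · rw [if_neg hocc] at h
          cases hu : unify n (substE x (Term.app f ss) E') with
          | none => rw [hu] at h; simp at h
          | some bs' =>
            rw [hu] at h; simp only [Option.map_some, Option.some.injEq] at h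
            subst h
            have hfact : ∀ u : Term F,
                u.subst (toSub ((x, Term.app f ss) :: bs')) =
                  (u.subst (single x (Term.app f ss))).subst (toSub bs') := by
              intro u; rw [Term.subst_subst]; rfl
            rcases List.mem_cons.mp hpr with rfl | hpr'
            · show (Term.app f ss).subst _ = (Term.var x).subst _
              rw [hfact, hfact]
              congr 1
              simp only [Term.subst_var, single_same]
              exact (Term.subst_congr (fun z hz => single_other (fun hzx => hocc (by rw [← hzx]; exact hz)) _)).trans
                (Term.subst_id _)
            · have := ih _ bs' hu (pr.1.subst (single x (Term.app f ss)),
                pr.2.subst (single x (Term.app f ss)))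
                (by simp only [substE, List.mem_map]; exact ⟨pr, hpr', rfl⟩)
              rw [hfact, hfact]
              exact this
      | Term.app f ss, Term.app g ts =>
        rw [unify] at h
        by_cases hfg : f = g ∧ ss.length = ts.length
        · rw [if_pos hfg] at h
          rcases List.mem_cons.mp hpr with rfl | hpr'
          · show (Term.app f ss).subst _ = (Term.app g ts).subst _
            simp only [Term.subst_app]
            rw [hfg.1]
            congr 1
            exact map_eq_of_zip hfg.2
              (fun pr2 hpr2 => ih _ bs h pr2 (List.mem_append_left _ hpr2))
          · exact ih _ bs h pr (List.mem_append_right _ hpr')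
        · rw [if_neg hfg] at h; simp at h

theorem unify_mono :
    ∀ (n : ℕ) (E : Eqs F) (bs : List (ℕ × Term F)), unify n E = some bs →
      ∀ n', n ≤ n' → unify n' E = some bs := by
  intro n
  induction n with
  | zero => intro E bs h; simp [unify] at h
  | succ n ih =>
    intro E bs h n' hn'
    obtain ⟨n'', rfl⟩ : ∃ n'', n' = n'' + 1 := ⟨n' - 1, by omega⟩
    have hn'' : n ≤ n'' := by omega
    match E with
    | [] => rw [unify] at h ⊢; exact h
    | (s, t) :: E' =>
      match s, t with
      | Term.var x, Term.var y =>
        rw [unify] at h ⊢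
        by_cases hxy : x = y
        · rw [if_pos hxy] at h ⊢; exact ih _ _ h _ hn''
        · rw [if_neg hxy] at h ⊢
          cases hu : unify n (substE x (Term.var y) E') with
          | none => rw [hu] at h; simp at h
          | some bs' => rw [hu] at h; rw [ih _ _ hu _ hn'']; exact h
      | Term.var x, Term.app g ts =>
        rw [unify] at h ⊢
        by_cases hocc : x ∈ (Term.app g ts : Term F).varsList
        · rw [if_pos hocc] at h; simp at h
        · rw [if_neg hocc] at h ⊢
          cases hu : unify n (substE x (Term.app g ts) E') with
          | none => rw [hu] at h; simp at h
          | some bs' => rw [hu] at h; rw [ih _ _ hu _ hn'']; exact h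
      | Term.app f ss, Term.var x =>
        rw [unify] at h ⊢
        by_cases hocc : x ∈ (Term.app f ss : Term F).varsList
        · rw [if_pos hocc] at h; simp at h
        · rw [if_neg hocc] at h ⊢
          cases hu : unify n (substE x (Term.app f ss) E') with
          | none => rw [hu] at h; simp at h
          | some bs' => rw [hu] at h; rw [ih _ _ hu _ hn'']; exact h
      | Term.app f ss, Term.app g ts =>
        rw [unify] at h ⊢
        by_cases hfg : f = g ∧ ss.length = ts.length
        · rw [if_pos hfg] at h ⊢; exact ih _ _ h _ hn''
        · rw [if_neg hfg] at h; simp at h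

end Unification
section Completeness

variable {F : Type}

theorem dlen_le {l l' : List ℕ} (h : ∀ x ∈ l, x ∈ l') :
    l.dedup.length ≤ l'.dedup.length := by
  rw [← List.card_toFinset, ← List.card_toFinset]
  exact Finset.card_le_card (fun x hx => by
    simp only [List.mem_toFinset] at hx ⊢; exact h x hx)

theorem dlen_lt {l l' : List ℕ} (h : ∀ x ∈ l, x ∈ l') {x : ℕ}
    (hx : x ∈ l') (hnx : x ∉ l) : l.dedup.length < l'.dedup.length := by
  rw [← List.card_toFinset, ← List.card_toFinset]
  refine Finset.card_lt_card ⟨fun z hz => by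
    simp only [List.mem_toFinset] at hz ⊢; exact h z hz, fun hsub => hnx ?_⟩
  have := hsub (by simpa using hx)
  simpa using this

theorem mem_varsE_substE {x : ℕ} {t : Term F} {E : Eqs F} {y : ℕ}
    (hy : y ∈ varsE (substE x t E)) :
    (y ∈ varsE E ∧ y ≠ x) ∨ y ∈ t.varsList := by
  rw [mem_varsE] at hy
  obtain ⟨pr', hpr', hy'⟩ := hy
  simp only [substE, List.mem_map] at hpr'
  obtain ⟨pr, hpr, rfl⟩ := hpr'
  rcases hy' with hy' | hy' <;>
  · rw [Term.mem_vars_subst] at hy'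
    obtain ⟨z, hz, hyz⟩ := hy'
    by_cases hzx : z = x
    · subst hzx; rw [single_same] at hyz; exact Or.inr hyz
    · rw [single_other hzx] at hyz
      simp only [Term.varsList_var, List.mem_singleton] at hyz
      subst hyz
      exact Or.inl ⟨mem_varsE.mpr ⟨pr, hpr, by tauto⟩, hzx⟩

theorem sizeE_zip : ∀ (ss ts : List (Term F)),
    sizeE (ss.zip ts) ≤ (ss.map Term.size).sum + (ts.map Term.size).sum := by
  intro ss
  induction ss with
  | nil => intro ts; simp [sizeE]
  | cons a l ih =>
    intro ts
    cases ts with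
    | nil => simp [sizeE]
    | cons b m =>
      simp only [List.zip_cons_cons, sizeE_cons, List.map_cons, List.sum_cons]
      have := ih m
      omega

variable [DecidableEq F]

theorem unify_complete (θ : ℕ → Term F) :
    ∀ (k m : ℕ) (E : Eqs F), (varsE E).dedup.length ≤ k → sizeE E ≤ m →
      (∀ pr ∈ E, pr.1.subst θ = pr.2.subst θ) →
      ∃ n bs, unify n E = some bs ∧ ∀ y, ((toSub bs) y).subst θ = θ y := by
  intro k
  induction k using Nat.strong_induction_on with
  | _ k IHk =>
  intro m
  induction m using Nat.strong_induction_on with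
  | _ m IHm =>
  intro E hk hm huni
  match E with
  | [] => exact ⟨1, [], by rw [unify], fun y => by simp [toSub]⟩
  | (s, t) :: E' =>
    have hst : s.subst θ = t.subst θ := huni (s, t) (by simp)
    have huni' : ∀ pr ∈ E', pr.1.subst θ = pr.2.subst θ :=
      fun pr hpr => huni pr (List.mem_cons_of_mem _ hpr)
    -- generic facts
    have hsubE' : ∀ y ∈ varsE E', y ∈ varsE ((s, t) :: E') := by
      intro y hy
      rw [mem_varsE] at hy ⊢
      obtain ⟨pr, hpr, h⟩ := hy
      exact ⟨pr, List.mem_cons_of_mem _ hpr, h⟩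
    match s, t with
    | Term.var x, Term.var y =>
      by_cases hxy : x = y
      · subst hxy
        obtain ⟨n, bs, h1, h2⟩ := IHm (sizeE E') (by simp at hm; omega) E'
          (le_trans (dlen_le hsubE') hk) le_rfl huni'
        exact ⟨n + 1, bs, by rw [unify, if_pos rfl]; exact h1, h2⟩
      · have hxt : θ x = (Term.var y : Term F).subst θ := by simpa using hst
        have hocc : x ∉ (Term.var y : Term F).varsList := by simp [hxy]
        have hfun : (fun z => (single x (Term.var y) z).subst θ) = θ :=
          funext (single_subst_eq hxt)
        have huni'' : ∀ pr ∈ substE x (Term.var y) E', pr.1.subst θ = pr.2.subst θ := by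
          intro pr' hpr'
          simp only [substE, List.mem_map] at hpr'
          obtain ⟨pr, hpr, rfl⟩ := hpr'
          simp only [Term.subst_subst, hfun]
          exact huni' pr hpr
        have hE''sub : ∀ z ∈ varsE (substE x (Term.var y) E'), z ∈ varsE ((Term.var x, Term.var y) :: E') := by
          intro z hz
          rcases mem_varsE_substE hz with ⟨hz1, _⟩ | hz2
          · exact hsubE' z hz1
          · exact mem_varsE.mpr ⟨(Term.var x, Term.var y), by simp, Or.inr hz2⟩
        have hxmem : x ∈ varsE ((Term.var x, Term.var y) :: E') :=
          mem_varsE.mpr ⟨(Term.var x, Term.var y), by simp, Or.inl (by simp)⟩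
        have hxnot : x ∉ varsE (substE x (Term.var y) E') := by
          intro hmem
          rcases mem_varsE_substE hmem with ⟨_, hne⟩ | h2
          · exact hne rfl
          · exact hocc h2
        obtain ⟨n, bs', h1, h2⟩ := IHk (varsE (substE x (Term.var y) E')).dedup.length
          (lt_of_lt_of_le (dlen_lt hE''sub hxmem hxnot) hk)
          (sizeE (substE x (Term.var y) E')) _ le_rfl le_rfl huni''
        refine ⟨n + 1, (x, Term.var y) :: bs', by rw [unify, if_neg hxy, h1]; rfl, ?_⟩
        intro z
        show ((single x (Term.var y) z).subst (toSub bs')).subst θ = θ z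
        rw [Term.subst_subst, funext h2]
        exact congrFun hfun z
    | Term.var x, Term.app g ts =>
      have hxt : θ x = (Term.app g ts : Term F).subst θ := by simpa using hst
      have hocc : x ∉ (Term.app g ts : Term F).varsList := by
        intro hmem
        have := Term.size_lt_subst hmem (fun y h => by cases h) θ
        rw [← hxt] at this
        omega
      have hfun : (fun z => (single x (Term.app g ts) z).subst θ) = θ :=
        funext (single_subst_eq hxt)
      have huni'' : ∀ pr ∈ substE x (Term.app g ts) E', pr.1.subst θ = pr.2.subst θ := by
        intro pr' hpr'
        simp only [substE, List.mem_map] at hpr'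
        obtain ⟨pr, hpr, rfl⟩ := hpr'
        simp only [Term.subst_subst, hfun]
        exact huni' pr hpr
      have hE''sub : ∀ z ∈ varsE (substE x (Term.app g ts) E'),
          z ∈ varsE ((Term.var x, Term.app g ts) :: E') := by
        intro z hz
        rcases mem_varsE_substE hz with ⟨hz1, _⟩ | hz2
        · exact hsubE' z hz1
        · exact mem_varsE.mpr ⟨(Term.var x, Term.app g ts), by simp, Or.inr hz2⟩
      have hxmem : x ∈ varsE ((Term.var x, Term.app g ts) :: E') :=
        mem_varsE.mpr ⟨(Term.var x, Term.app g ts), by simp, Or.inl (by simp)⟩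
      have hxnot : x ∉ varsE (substE x (Term.app g ts) E') := by
        intro hmem
        rcases mem_varsE_substE hmem with ⟨_, hne⟩ | h2
        · exact hne rfl
        · exact hocc h2
      obtain ⟨n, bs', h1, h2⟩ := IHk (varsE (substE x (Term.app g ts) E')).dedup.length
        (lt_of_lt_of_le (dlen_lt hE''sub hxmem hxnot) hk)
        (sizeE (substE x (Term.app g ts) E')) _ le_rfl le_rfl huni''
      refine ⟨n + 1, (x, Term.app g ts) :: bs', by rw [unify, if_neg hocc, h1]; rfl, ?_⟩
      intro z
      show ((single x (Term.app g ts) z).subst (toSub bs')).subst θ = θ z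
      rw [Term.subst_subst, funext h2]
      exact congrFun hfun z
    | Term.app f ss, Term.var x =>
      have hxt : θ x = (Term.app f ss : Term F).subst θ := by simpa using hst.symm
      have hocc : x ∉ (Term.app f ss : Term F).varsList := by
        intro hmem
        have := Term.size_lt_subst hmem (fun y h => by cases h) θ
        rw [← hxt] at this
        omega
      have hfun : (fun z => (single x (Term.app f ss) z).subst θ) = θ :=
        funext (single_subst_eq hxt)
      have huni'' : ∀ pr ∈ substE x (Term.app f ss) E', pr.1.subst θ = pr.2.subst θ := by
        intro pr' hpr'
        simp only [substE, List.mem_map] at hpr'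
        obtain ⟨pr, hpr, rfl⟩ := hpr'
        simp only [Term.subst_subst, hfun]
        exact huni' pr hpr
      have hE''sub : ∀ z ∈ varsE (substE x (Term.app f ss) E'),
          z ∈ varsE ((Term.app f ss, Term.var x) :: E') := by
        intro z hz
        rcases mem_varsE_substE hz with ⟨hz1, _⟩ | hz2
        · exact hsubE' z hz1
        · exact mem_varsE.mpr ⟨(Term.app f ss, Term.var x), by simp, Or.inl hz2⟩
      have hxmem : x ∈ varsE ((Term.app f ss, Term.var x) :: E') :=
        mem_varsE.mpr ⟨(Term.app f ss, Term.var x), by simp, Or.inr (by simp)⟩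
      have hxnot : x ∉ varsE (substE x (Term.app f ss) E') := by
        intro hmem
        rcases mem_varsE_substE hmem with ⟨_, hne⟩ | h2
        · exact hne rfl
        · exact hocc h2
      obtain ⟨n, bs', h1, h2⟩ := IHk (varsE (substE x (Term.app f ss) E')).dedup.length
        (lt_of_lt_of_le (dlen_lt hE''sub hxmem hxnot) hk)
        (sizeE (substE x (Term.app f ss) E')) _ le_rfl le_rfl huni''
      refine ⟨n + 1, (x, Term.app f ss) :: bs', by rw [unify, if_neg hocc, h1]; rfl, ?_⟩
      intro z
      show ((single x (Term.app f ss) z).subst (toSub bs')).subst θ = θ z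
      rw [Term.subst_subst, funext h2]
      exact congrFun hfun z
    | Term.app f ss, Term.app g ts =>
      have hfg : f = g ∧ ss.map (Term.subst θ) = ts.map (Term.subst θ) := by
        simpa [Term.app.injEq] using hst
      have hlen : ss.length = ts.length := by
        have := congrArg List.length hfg.2
        simpa using this
      have huniz : ∀ pr ∈ ss.zip ts ++ E', pr.1.subst θ = pr.2.subst θ := by
        intro pr hpr
        rcases List.mem_append.mp hpr with hpr | hpr
        · exact zip_eq_of_map_eq hfg.2 pr hpr
        · exact huni' pr hpr
      have hsubz : ∀ z ∈ varsE (ss.zip ts ++ E'),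
          z ∈ varsE ((Term.app f ss, Term.app g ts) :: E') := by
        intro z hz
        rw [mem_varsE] at hz
        obtain ⟨pr, hpr, hz'⟩ := hz
        rcases List.mem_append.mp hpr with hpr | hpr
        · have hmem := List.of_mem_zip hpr
          refine mem_varsE.mpr ⟨(Term.app f ss, Term.app g ts), by simp, ?_⟩
          rcases hz' with hz' | hz'
          · exact Or.inl (by
              simp only [Term.varsList_app, List.mem_flatten, List.mem_map]
              exact ⟨pr.1.varsList, ⟨pr.1, hmem.1, rfl⟩, hz'⟩)
          · exact Or.inr (by
              simp only [Term.varsList_app, List.mem_flatten, List.mem_map]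
              exact ⟨pr.2.varsList, ⟨pr.2, hmem.2, rfl⟩, hz'⟩)
        · exact hsubE' z (mem_varsE.mpr ⟨pr, hpr, hz'⟩)
      have hsize : sizeE (ss.zip ts ++ E') < sizeE ((Term.app f ss, Term.app g ts) :: E') := by
        have := sizeE_zip ss ts
        simp only [sizeE_append, sizeE_cons, Term.size_app]
        omega
      obtain ⟨n, bs, h1, h2⟩ := IHm (sizeE (ss.zip ts ++ E')) (by omega) _
        (le_trans (dlen_le hsubz) hk) le_rfl huniz
      exact ⟨n + 1, bs, by rw [unify, if_pos ⟨hfg.1, hlen⟩]; exact h1, h2⟩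

theorem exists_mgu' {s t : Term F} (θ0 : ℕ → Term F) (h : s.subst θ0 = t.subst θ0) :
    ∃ σ : ℕ → Term F, Unifies σ s t ∧
      ∀ θ : ℕ → Term F, Unifies θ s t → ∀ y, (σ y).subst θ = θ y := by
  obtain ⟨n0, bs0, h1, _⟩ := unify_complete θ0 (varsE [(s, t)]).dedup.length
    (sizeE [(s, t)]) [(s, t)] le_rfl le_rfl (by
      intro pr hpr; simp only [List.mem_singleton] at hpr; subst hpr; exact h)
  refine ⟨toSub bs0, unify_sound n0 _ bs0 h1 (s, t) (by simp), ?_⟩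
  intro θ hθ y
  obtain ⟨n1, bs1, g1, g2⟩ := unify_complete θ (varsE [(s, t)]).dedup.length
    (sizeE [(s, t)]) [(s, t)] le_rfl le_rfl (by
      intro pr hpr; simp only [List.mem_singleton] at hpr; subst hpr; exact hθ)
  have e0 := unify_mono n0 _ bs0 h1 (max n0 n1) (le_max_left _ _)
  have e1 := unify_mono n1 _ bs1 g1 (max n0 n1) (le_max_right _ _)
  rw [e0] at e1
  injection e1 with e1
  rw [e1]
  exact g2 y

end Completeness
section LCTRSAux

variable {F : Type}

namespace Term

theorem mem_varsList_rename {π : ℕ → ℕ} {t : Term F} {y : ℕ} :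
    y ∈ (t.rename π).varsList ↔ ∃ x ∈ t.varsList, y = π x := by
  simp only [Term.rename, mem_vars_subst, varsList_var, List.mem_singleton]

theorem rename_then_subst (t : Term F) (π : ℕ → ℕ) (δ : ℕ → Term F) :
    (t.rename π).subst δ = t.subst (fun x => δ (π x)) := by
  rw [Term.rename, Term.subst_subst]
  exact Term.subst_congr (fun x _ => by simp)

theorem subst_then_rename (t : Term F) (τ : ℕ → Term F) (π : ℕ → ℕ) :
    (t.subst τ).rename π = t.subst (fun x => (τ x).rename π) := by
  rw [Term.rename, Term.subst_subst]; rfl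

theorem rename_ground {t : Term F} (h : t.varsList = []) (π : ℕ → ℕ) :
    t.rename π = t := subst_ground h _

theorem vars_rename (π : ℕ ≃ ℕ) (t : Term F) : (t.rename π).vars = π '' t.vars := by
  ext y
  simp only [Term.vars, Set.mem_setOf_eq, mem_varsList_rename, Set.mem_image]
  constructor
  · rintro ⟨x, hx, rfl⟩; exact ⟨x, hx, rfl⟩
  · rintro ⟨x, hx, rfl⟩; exact ⟨x, hx, rfl⟩

end Term

theorem subst_value_eq {σ : ℕ → Term F} {u : Term F} {v : F}
    (h : u.subst σ = Term.app v []) : (∃ y, u = Term.var y) ∨ u = Term.app v [] := by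
  cases u with
  | var y => exact Or.inl ⟨y, rfl⟩
  | app f ts =>
    simp only [Term.subst_app, Term.app.injEq] at h
    obtain ⟨rfl, hts⟩ := h
    have : ts = [] := by
      cases ts with
      | nil => rfl
      | cons a l => simp at hts
    exact Or.inr (by rw [this])

@[simp] theorem subst_value (σ : ℕ → Term F) (v : F) :
    (Term.app v [] : Term F).subst σ = Term.app v [] := by simp

/-- Renaming of a rule. -/
def renameRule (π : ℕ → ℕ) (ρ : Rule F) : Rule F :=
  ⟨ρ.lhs.rename π, ρ.rhs.rename π, ρ.cond.rename π⟩

theorem isVariantR_renameRule (π : ℕ ≃ ℕ) (ρ : Rule F) :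
    IsVariantR ρ (renameRule π ρ) := ⟨π, rfl, rfl, rfl⟩

theorem LVar_renameRule (π : ℕ ≃ ℕ) (ρ : Rule F) :
    LVar (renameRule π ρ) = π '' LVar ρ := by
  simp only [LVar, renameRule, Term.vars_rename, Set.image_union,
    Set.image_diff π.injective]

theorem ruleVars_renameRule (π : ℕ ≃ ℕ) (ρ : Rule F) :
    ruleVars (renameRule π ρ) = π '' ruleVars ρ := by
  simp only [ruleVars, renameRule, Term.vars_rename, Set.image_union]

theorem LVar_subset_ruleVars (ρ : Rule F) : LVar ρ ⊆ ruleVars ρ := by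
  intro x hx
  rcases hx with hx | hx
  · exact Or.inr hx
  · exact Or.inl (Or.inr hx.1)

theorem cond_vars_subset_LVar (ρ : Rule F) : ρ.cond.vars ⊆ LVar ρ := Set.subset_union_left

theorem lhs_vars_subset_ruleVars (ρ : Rule F) : ρ.lhs.vars ⊆ ruleVars ρ :=
  fun _ hx => Or.inl (Or.inl hx)

theorem rhs_vars_subset_ruleVars (ρ : Rule F) : ρ.rhs.vars ⊆ ruleVars ρ :=
  fun _ hx => Or.inl (Or.inr hx)

/-- Variable bound for a rule. -/
def maxVar (l : List ℕ) : ℕ := l.foldr max 0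

theorem le_maxVar {x : ℕ} {l : List ℕ} (h : x ∈ l) : x ≤ maxVar l := by
  induction l with
  | nil => simp at h
  | cons a m ih =>
    rcases List.mem_cons.mp h with rfl | h
    · simp [maxVar]
    · have := ih h
      simp only [maxVar, List.foldr_cons] at *
      omega

def boundR (ρ : Rule F) : ℕ :=
  maxVar (ρ.lhs.varsList ++ ρ.rhs.varsList ++ ρ.cond.varsList) + 1

theorem lt_boundR {x : ℕ} {ρ : Rule F} (h : x ∈ ruleVars ρ) : x < boundR ρ := by
  have : x ∈ ρ.lhs.varsList ++ ρ.rhs.varsList ++ ρ.cond.varsList := by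
    rcases h with (h | h) | h <;> simp only [List.mem_append] <;> tauto
  have := le_maxVar this
  simp only [boundR]
  omega

/-- Permutation mapping `[0, N)` to even numbers below `2N`. -/
def evenPerm (N : ℕ) : ℕ ≃ ℕ where
  toFun x := if x < N then 2 * x else if x < 2 * N then 2 * (x - N) + 1 else x
  invFun y := if y < 2 * N then (if y % 2 = 0 then y / 2 else N + (y - 1) / 2) else y
  left_inv x := by dsimp only; split_ifs <;> omega
  right_inv y := by dsimp only; split_ifs <;> omega

/-- Permutation mapping `[0, N)` to odd numbers below `2N`. -/
def oddPerm (N : ℕ) : ℕ ≃ ℕ where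
  toFun x := if x < N then 2 * x + 1 else if x < 2 * N then 2 * (x - N) else x
  invFun y := if y < 2 * N then (if y % 2 = 0 then N + y / 2 else (y - 1) / 2) else y
  left_inv x := by dsimp only; split_ifs <;> omega
  right_inv y := by dsimp only; split_ifs <;> omega

theorem evenPerm_lt {N x : ℕ} (h : x < N) : evenPerm N x = 2 * x := by
  simp [evenPerm, h]

theorem oddPerm_lt {N x : ℕ} (h : x < N) : oddPerm N x = 2 * x + 1 := by
  simp [oddPerm, h]

namespace LCTRS

variable {R : LCTRS F}

theorem conj_subst (R : LCTRS F) (a b : Term F) (σ : ℕ → Term F) :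
    (R.conj a b).subst σ = R.conj (a.subst σ) (b.subst σ) := by
  simp [LCTRS.conj]

theorem varsList_conj (R : LCTRS F) (a b : Term F) :
    (R.conj a b).varsList = a.varsList ++ b.varsList := by
  simp [LCTRS.conj]

theorem trueT_subst (R : LCTRS F) (σ : ℕ → Term F) : R.trueT.subst σ = R.trueT := by
  simp [LCTRS.trueT]

theorem bigConj_subst (R : LCTRS F) (l : List (Term F)) (σ : ℕ → Term F) :
    (R.bigConj l).subst σ = R.bigConj (l.map (Term.subst σ)) := by
  induction l with
  | nil => simp [LCTRS.bigConj, LCTRS.trueT]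
  | cons a m ih => simp only [LCTRS.bigConj, List.foldr_cons, List.map_cons, conj_subst] at *
                   rw [ih]

theorem mem_varsList_bigConj {R : LCTRS F} {l : List (Term F)} {x : ℕ} :
    x ∈ (R.bigConj l).varsList ↔ ∃ a ∈ l, x ∈ a.varsList := by
  induction l with
  | nil => simp [LCTRS.bigConj, LCTRS.trueT]
  | cons a m ih =>
    simp only [LCTRS.bigConj, List.foldr_cons, varsList_conj, List.mem_append] at *
    rw [ih]
    simp

/-- Facts extracted from well-formedness. -/
theorem WF.val_sub (h : R.WF) : R.Val ⊆ R.Fth := h.1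
theorem WF.J_val (h : R.WF) : ∀ t, R.J t ∈ R.Val := h.2.2.2.1
theorem WF.J_value (h : R.WF) : ∀ v ∈ R.Val, R.J (Term.app v []) = v := h.2.2.2.2.1
theorem WF.tt_val (h : R.WF) : R.tt ∈ R.Val := h.2.2.2.2.2.1
theorem WF.andS_mem (h : R.WF) : R.andS ∈ R.Fth \ R.Val := h.2.2.2.2.2.2.1
theorem WF.eqS_mem (h : R.WF) : R.eqS ∈ R.Fth \ R.Val := h.2.2.2.2.2.2.2.2.1
theorem WF.conj_iff (h : R.WF) :
    ∀ a b : Term F, IsLogical R.Fth a → IsLogical R.Fth b → Ground a → Ground b →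
      (R.J (R.conj a b) = R.tt ↔ (R.J a = R.tt ∧ R.J b = R.tt)) :=
  h.2.2.2.2.2.2.2.2.2.2.1
theorem WF.eq_iff (h : R.WF) :
    ∀ a b : Term F, IsLogical R.Fth a → IsLogical R.Fth b → Ground a → Ground b →
      (R.J (Term.app R.eqS [a, b]) = R.tt ↔ R.J a = R.J b) :=
  h.2.2.2.2.2.2.2.2.2.2.2.1
theorem WF.rules_wf (h : R.WF) :
    ∀ ρ ∈ R.rules, (∃ f ts, ρ.lhs = Term.app f ts ∧ f ∈ R.Fte \ R.Fth) ∧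
      IsLogical R.Fth ρ.cond :=
  h.2.2.2.2.2.2.2.2.2.2.2.2

theorem trueT_logical (h : R.WF) : IsLogical R.Fth R.trueT :=
  IsLogical.app (h.val_sub h.tt_val) (by simp)

theorem trueT_ground (R : LCTRS F) : Ground (R.trueT : Term F) := by
  simp [LCTRS.trueT, Ground]

theorem J_trueT (h : R.WF) : R.J R.trueT = R.tt := h.J_value _ h.tt_val

theorem conj_logical (h : R.WF) {a b : Term F} (ha : IsLogical R.Fth a)
    (hb : IsLogical R.Fth b) : IsLogical R.Fth (R.conj a b) :=
  IsLogical.app h.andS_mem.1 (by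
    intro t ht
    rcases List.mem_cons.mp ht with rfl | ht
    · exact ha
    · rcases List.mem_cons.mp ht with rfl | ht
      · exact hb
      · simp at ht)

theorem conj_ground {a b : Term F} (ha : Ground a) (hb : Ground b) :
    Ground (R.conj a b) := by
  simp only [Ground] at *
  rw [varsList_conj, ha, hb]
  rfl

/-- Main fact about `bigConj`: all components logical, ground and true. -/
theorem bigConj_true (h : R.WF) {l : List (Term F)}
    (hl : ∀ a ∈ l, IsLogical R.Fth a ∧ Ground a ∧ R.J a = R.tt) :
    IsLogical R.Fth (R.bigConj l) ∧ Ground (R.bigConj l) ∧ R.J (R.bigConj l) = R.tt := by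
  induction l with
  | nil => exact ⟨trueT_logical h, R.trueT_ground, J_trueT h⟩
  | cons a m ih =>
    obtain ⟨h1, h2, h3⟩ := hl a (by simp)
    obtain ⟨g1, g2, g3⟩ := ih (fun b hb => hl b (by simp [hb]))
    refine ⟨conj_logical h h1 g1, conj_ground h2 g2, ?_⟩
    exact (h.conj_iff a _ h1 g1 h2 g2).mpr ⟨h3, g3⟩

theorem validC_of_ground (R : LCTRS F) {φ : Term F} (hg : φ.varsList = [])
    (hJ : R.J φ = R.tt) : R.validC φ := by
  intro γ _
  rw [Term.subst_ground hg]
  exact hJ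

theorem J_of_validC_ground (R : LCTRS F) {φ : Term F} (hg : φ.varsList = [])
    (h : R.validC φ) : R.J φ = R.tt := by
  have := h Term.var (by intro x hx; simp only [Term.vars, Set.mem_setOf_eq, hg] at hx; simp at hx)
  rwa [Term.subst_id] at this

theorem IsLogical_subst {Fth : Set F} {t : Term F} (h : IsLogical Fth t)
    {σ : ℕ → Term F} (hσ : ∀ x, IsLogical Fth (σ x)) : IsLogical Fth (t.subst σ) := by
  induction h with
  | var x => simpa using hσ x
  | app hf hts ih =>
    rw [Term.subst_app]
    exact IsLogical.app hf (by
      intro u hu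
      rw [List.mem_map] at hu
      obtain ⟨w, hw, rfl⟩ := hu
      exact ih w hw)

theorem EC_varsList_subset (R : LCTRS F) (ρ : Rule F) :
    ∀ x ∈ (R.EC ρ).varsList, x ∈ LVar ρ := by
  intro x hx
  rw [LCTRS.EC, mem_varsList_bigConj] at hx
  obtain ⟨a, ha, hxa⟩ := hx
  rw [List.mem_map] at ha
  obtain ⟨y, hy, rfl⟩ := ha
  simp only [Term.varsList_app, List.map_cons, Term.varsList_var, List.map_nil,
    List.flatten, List.append_eq, List.append_nil, List.mem_append, List.mem_singleton] at hxa
  have hxy : x = y := by tauto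
  subst hxy
  rw [EVarList, List.mem_filter] at hy
  have h1 : x ∈ ρ.rhs.varsList := hy.1
  have h2 := hy.2
  simp at h2
  exact Or.inr ⟨h1, h2.1⟩

end LCTRS

end LCTRSAux
section BarRep

variable {F : Type}

private theorem flatten_map_singleton (l : List ℕ) :
    (l.map (fun a => ([a] : List ℕ))).flatten = l := by
  induction l with
  | nil => rfl
  | cons a m ih => simp [ih]

private theorem varsList_values (l : List F) :
    ((l.map (fun v => (Term.app v [] : Term F))).map Term.varsList).flatten = ([] : List ℕ) := by
  induction l with
  | nil => rfl
  | cons a m ih => simpa using ih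

namespace LCTRS

theorem varsList_calc_lhs (R : LCTRS F) (f : F) :
    (R.calcRule f).lhs.varsList = List.range (R.arity f) := by
  show (Term.app f ((List.range (R.arity f)).map Term.var)).varsList = _
  rw [Term.varsList_app, List.map_map]
  have : (Term.varsList ∘ (Term.var : ℕ → Term F)) = fun a => [a] := by
    funext a; simp [Function.comp]
  rw [this, flatten_map_singleton]

theorem LVar_calc (R : LCTRS F) (f : F) :
    LVar (R.calcRule f) = {x | x ≤ R.arity f} := by
  have hlhs := R.varsList_calc_lhs f
  ext x
  simp only [LVar, Set.mem_union, Set.mem_diff, Term.vars, Set.mem_setOf_eq]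
  show x ∈ (Term.app R.eqS [Term.var (R.arity f), (R.calcRule f).lhs]).varsList ∨
    (x ∈ (Term.var (R.arity f) : Term F).varsList ∧ x ∉ (R.calcRule f).lhs.varsList) ↔
    x ≤ R.arity f
  rw [Term.varsList_app]
  simp only [List.map_cons, Term.varsList_var, List.map_nil, hlhs]
  simp only [List.flatten, List.append_eq, List.append_nil, List.mem_append, List.mem_singleton,
    List.mem_range]
  omega

/-- Normal form of members of the transformed TRS `R̄`. -/
theorem barRep {R : LCTRS F} (hwf : R.WF) {lr : Term F × Term F} (h : lr ∈ barTRS R) :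
    ∃ (ρ : Rule F) (τ : ℕ → Term F), ρ ∈ R.Rrc ∧
      (∀ x ∈ LVar ρ, ∃ v ∈ R.Val, τ x = Term.app v []) ∧
      (∀ x, x ∉ LVar ρ → τ x = Term.var x) ∧
      (ρ.cond.subst τ).varsList = [] ∧
      R.J (ρ.cond.subst τ) = R.tt ∧
      IsLogical R.Fth ρ.cond ∧
      (∃ f ts, ρ.lhs = Term.app f ts ∧ f ∉ R.Val) ∧
      lr = (ρ.lhs.subst τ, ρ.rhs.subst τ) := by
  rcases h with ⟨ρ, hρ, τ, hdom, hval, hvalid, rfl⟩ | ⟨f, hf, vs, hlen, hvs, rfl⟩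
  · have hoff : ∀ x, x ∉ LVar ρ → τ x = Term.var x := by
      intro x hx
      by_contra hne
      exact hx (hdom ▸ (hne : τ x ≠ Term.var x))
    have hvals : ∀ x ∈ LVar ρ, ∃ v ∈ R.Val, τ x = Term.app v [] := fun x hx => hval x hx
    have hground : (ρ.cond.subst τ).varsList = [] := by
      rw [List.eq_nil_iff_forall_not_mem]
      intro y hy
      rw [Term.mem_vars_subst] at hy
      obtain ⟨x, hx, hyx⟩ := hy
      obtain ⟨v, _, hv⟩ := hvals x (cond_vars_subset_LVar ρ hx)
      rw [hv] at hyx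
      simp at hyx
    refine ⟨ρ, τ, Or.inl hρ, hvals, hoff, hground, R.J_of_validC_ground hground hvalid,
      (hwf.rules_wf ρ hρ).2, ?_, rfl⟩
    obtain ⟨⟨f, ts, hlhs, hf⟩, _⟩ := hwf.rules_wf ρ hρ
    exact ⟨f, ts, hlhs, fun hmem => hf.2 (hwf.val_sub hmem)⟩
  · -- calculation rules
    set n := R.arity f with hn
    set t0 : Term F := Term.app f (vs.map fun v => Term.app v []) with ht0
    have hlen' : vs.length = n := hlen
    set τ : ℕ → Term F := fun x =>
      if hx : x < vs.length then Term.app vs[x] []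
      else if x = vs.length then Term.app (R.J t0) [] else Term.var x with hτ
    have hLV := R.LVar_calc f
    have hτval : ∀ x ∈ LVar (R.calcRule f), ∃ v ∈ R.Val, τ x = Term.app v [] := by
      intro x hx
      rw [hLV] at hx
      by_cases hlt : x < vs.length
      · exact ⟨vs[x], hvs _ (vs.getElem_mem _), by simp [hτ, hlt]⟩
      · have : x = vs.length := by
          have : x ≤ n := hx
          omega
        exact ⟨R.J t0, hwf.J_val t0, by simp [hτ, hlt, this]⟩
    have hτoff : ∀ x, x ∉ LVar (R.calcRule f) → τ x = Term.var x := by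
      intro x hx
      rw [hLV] at hx
      have h1 : ¬ x < vs.length := by simp only [Set.mem_setOf_eq] at hx; omega
      have h2 : ¬ x = vs.length := by simp only [Set.mem_setOf_eq] at hx; omega
      simp [hτ, h1, h2]
    have hxs : ((List.range n).map Term.var).map (Term.subst τ) =
        vs.map (fun v => (Term.app v [] : Term F)) := by
      rw [List.map_map]
      apply List.ext_getElem
      · simp [hlen']
      · intro i h1 h2
        simp only [List.getElem_map, List.getElem_range, Function.comp]
        have hi : i < vs.length := by simpa [hlen'] using h1
        simp [hτ, hi]
    have hτn : τ n = Term.app (R.J t0) [] := by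
      have h1 : ¬ n < vs.length := by omega
      simp [hτ, h1, hlen']
    have hlhsτ : (R.calcRule f).lhs.subst τ = t0 := by
      show (Term.app f ((List.range n).map Term.var)).subst τ = t0
      rw [Term.subst_app, hxs]
    have hcondτ : (R.calcRule f).cond.subst τ =
        Term.app R.eqS [Term.app (R.J t0) [], t0] := by
      show (Term.app R.eqS [Term.var n, (R.calcRule f).lhs]).subst τ = _
      rw [Term.subst_app]
      simp only [List.map_cons, List.map_nil, Term.subst_var, hτn]
      rw [show ((R.calcRule f).lhs.subst τ) = t0 from hlhsτ]
    have ht0ground : t0.varsList = [] := by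
      rw [ht0, Term.varsList_app, varsList_values]
    have ht0logical : IsLogical R.Fth t0 := by
      refine IsLogical.app hf.1 ?_
      intro u hu
      rw [List.mem_map] at hu
      obtain ⟨v, hv, rfl⟩ := hu
      exact IsLogical.app (hwf.val_sub (hvs v hv)) (by simp)
    have hJval : IsLogical R.Fth (Term.app (R.J t0) [] : Term F) :=
      IsLogical.app (hwf.val_sub (hwf.J_val t0)) (by simp)
    have hcondground : ((R.calcRule f).cond.subst τ).varsList = [] := by
      rw [hcondτ, Term.varsList_app]
      simp [ht0ground]
    have hcondJ : R.J ((R.calcRule f).cond.subst τ) = R.tt := by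
      rw [hcondτ]
      refine (hwf.eq_iff _ _ hJval ht0logical (by simp [Ground]) ht0ground).mpr ?_
      exact hwf.J_value _ (hwf.J_val t0)
    have hcondlog : IsLogical R.Fth (R.calcRule f).cond := by
      refine IsLogical.app hwf.eqS_mem.1 ?_
      intro u hu
      rcases List.mem_cons.mp hu with rfl | hu
      · exact IsLogical.var _
      · rcases List.mem_cons.mp hu with rfl | hu
        · refine IsLogical.app hf.1 ?_
          intro w hw
          rw [List.mem_map] at hw
          obtain ⟨i, _, rfl⟩ := hw
          exact IsLogical.var _
        · simp at hu
    refine ⟨R.calcRule f, τ, Or.inr ⟨f, hf, rfl⟩, hτval, hτoff, hcondground, hcondJ,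
      hcondlog, ⟨f, _, rfl, hf.2⟩, ?_⟩
    rw [hlhsτ]
    show (_, _) = (t0, (Term.var n : Term F).subst τ)
    rw [Term.subst_var, hτn]

end LCTRS

end BarRep
section MainAux

variable {F : Type}

theorem rename_value (π : ℕ → ℕ) (v : F) :
    (Term.app v [] : Term F).rename π = Term.app v [] := by
  rw [Term.rename]; simp

theorem rename_rename (t : Term F) (π κ : ℕ → ℕ) :
    (t.rename π).rename κ = t.rename (fun x => κ (π x)) :=
  Term.rename_then_subst t π _

theorem rename_congr {π κ : ℕ → ℕ} (t : Term F) (h : ∀ x ∈ t.varsList, π x = κ x) :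
    t.rename π = t.rename κ :=
  Term.subst_congr (fun x hx => by rw [h x hx])

theorem comp_subst_rename (π : ℕ ≃ ℕ) (τ0 : ℕ → Term F) (t : Term F) :
    (t.rename π).subst (fun y => (τ0 (π.symm y)).rename π) = (t.subst τ0).rename π := by
  rw [Term.rename_then_subst, Term.subst_then_rename]
  exact Term.subst_congr fun x _ => by simp

theorem EVarList_mem_LVar {ρ : Rule F} {x : ℕ} (hx : x ∈ EVarList ρ) : x ∈ LVar ρ := by
  rw [EVarList, List.mem_filter] at hx
  have h2 := hx.2
  simp at h2
  exact Or.inr ⟨hx.1, h2.1⟩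

theorem cond_varsList_ruleVars (ρ : Rule F) :
    ∀ x ∈ ρ.cond.varsList, x ∈ ruleVars ρ := fun _ hx => Or.inr hx

theorem lhs_varsList_ruleVars (ρ : Rule F) :
    ∀ x ∈ ρ.lhs.varsList, x ∈ ruleVars ρ := fun _ hx => Or.inl (Or.inl hx)

theorem rhs_varsList_ruleVars (ρ : Rule F) :
    ∀ x ∈ ρ.rhs.varsList, x ∈ ruleVars ρ := fun _ hx => Or.inl (Or.inr hx)

theorem LVar_mem_ruleVars {ρ : Rule F} {x : ℕ} (hx : x ∈ LVar ρ) : x ∈ ruleVars ρ :=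
  LVar_subset_ruleVars ρ hx

end MainAux

/-- For every critical pair `s ≈ t` of the transformed TRS `R̄`
there exist a constrained critical pair `s′ ≈ t′ [φ′]` of the LCTRS `R` and a
substitution `γ` such that `s = s′γ`, `t = t′γ` and `γ ⊨ φ′`. -/
theorem cp_of_barTRS_from_ccp {F : Type} (R : LCTRS F) (hwf : R.WF) :
    ∀ (p : List ℕ) (s t : Term F), IsCPAt (barTRS R) p s t →
      ∃ (p' : List ℕ) (s' t' φ' : Term F) (γ : ℕ → Term F),
        IsCCPAt R p' s' t' φ' ∧ s = s'.subst γ ∧ t = t'.subst γ ∧ R.respectsC γ φ' := by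
  classical
  intro p s t hcp
  obtain ⟨l₁, r₁, l₂, r₂, σ, l2p, ⟨lr1, hlr1, hvar1⟩, ⟨lr2, hlr2, hvar2⟩, _hdisj,
    hsubp, hl2pfun, hmgu, hrootCP, hrepl, ht⟩ := hcp
  obtain ⟨ρA, τA, hρA, hAval, hAoff, hAg, hAJ, hAlog, ⟨fA, tsA, hAlhs, hfA⟩, hAeq⟩ :=
    LCTRS.barRep hwf hlr1
  obtain ⟨ρB, τB, hρB, hBval, hBoff, hBg, hBJ, hBlog, ⟨fB, tsB, hBlhs, hfB⟩, hBeq⟩ :=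
    LCTRS.barRep hwf hlr2
  obtain ⟨π1c, hl₁0, hr₁0⟩ := hvar1
  obtain ⟨π2c, hl₂0, hr₂0⟩ := hvar2
  rw [hAeq] at hl₁0 hr₁0
  rw [hBeq] at hl₂0 hr₂0
  have hl₁ : l₁ = (ρA.lhs.subst τA).rename π1c := hl₁0
  have hr₁ : r₁ = (ρA.rhs.subst τA).rename π1c := hr₁0
  have hl₂ : l₂ = (ρB.lhs.subst τB).rename π2c := hl₂0
  have hr₂ : r₂ = (ρB.rhs.subst τB).rename π2c := hr₂0
  clear hl₁0 hr₁0 hl₂0 hr₂0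
  set N := max (boundR ρA) (boundR ρB) with hN
  set π₁ : ℕ ≃ ℕ := evenPerm N with hπ₁
  set π₂ : ℕ ≃ ℕ := oddPerm N with hπ₂
  set ρ₁ : Rule F := renameRule π₁ ρA with hρ₁
  set ρ₂ : Rule F := renameRule π₂ ρB with hρ₂
  set τ₁ : ℕ → Term F := fun y => (τA (π₁.symm y)).rename π₁ with hτ₁def
  set τ₂ : ℕ → Term F := fun y => (τB (π₂.symm y)).rename π₂ with hτ₂def
  set χ₁ : ℕ ≃ ℕ := π₁.symm.trans π1c with hχ₁
  set χ₂ : ℕ ≃ ℕ := π₂.symm.trans π2c with hχ₂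
  set ν₁ : ℕ → Term F := fun y => (τ₁ y).rename χ₁ with hν₁
  set ν₂ : ℕ → Term F := fun y => (τ₂ y).rename χ₂ with hν₂
  set Θ : ℕ → Term F := fun y =>
    if y ∈ ruleVars ρ₁ then (ν₁ y).subst σ else (ν₂ y).subst σ with hΘ
  -- basic facts about the renamed substitutions
  have hLV1 : LVar ρ₁ = π₁ '' LVar ρA := by rw [hρ₁]; exact LVar_renameRule π₁ ρA
  have hLV2' : LVar ρ₂ = π₂ '' LVar ρB := by rw [hρ₂]; exact LVar_renameRule π₂ ρB
  have hτ₁val : ∀ y ∈ LVar ρ₁, ∃ v ∈ R.Val, τ₁ y = Term.app v [] := by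
    intro y hy
    rw [hLV1] at hy
    obtain ⟨x, hx, rfl⟩ := hy
    obtain ⟨v, hv, hvx⟩ := hAval x hx
    refine ⟨v, hv, ?_⟩
    simp only [hτ₁def, Equiv.symm_apply_apply, hvx, rename_value]
  have hτ₂val : ∀ y ∈ LVar ρ₂, ∃ v ∈ R.Val, τ₂ y = Term.app v [] := by
    intro y hy
    rw [hLV2'] at hy
    obtain ⟨x, hx, rfl⟩ := hy
    obtain ⟨v, hv, hvx⟩ := hBval x hx
    refine ⟨v, hv, ?_⟩
    simp only [hτ₂def, Equiv.symm_apply_apply, hvx, rename_value]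
  have hτ₁off : ∀ y, y ∉ LVar ρ₁ → τ₁ y = Term.var y := by
    intro y hy
    have hmem : π₁.symm y ∉ LVar ρA := by
      intro hmem
      exact hy (by rw [hLV1]; exact ⟨π₁.symm y, hmem, by simp⟩)
    simp only [hτ₁def, hAoff _ hmem, Term.rename, Term.subst_var, Equiv.apply_symm_apply]
  have hτ₂off : ∀ y, y ∉ LVar ρ₂ → τ₂ y = Term.var y := by
    intro y hy
    have hmem : π₂.symm y ∉ LVar ρB := by
      intro hmem
      exact hy (by rw [hLV2']; exact ⟨π₂.symm y, hmem, by simp⟩)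
    simp only [hτ₂def, hBoff _ hmem, Term.rename, Term.subst_var, Equiv.apply_symm_apply]
  have hsubren1 : ∀ w : Term F, (w.rename π₁).subst τ₁ = (w.subst τA).rename π₁ :=
    fun w => comp_subst_rename π₁ τA w
  have hsubren2 : ∀ w : Term F, (w.rename π₂).subst τ₂ = (w.subst τB).rename π₂ :=
    fun w => comp_subst_rename π₂ τB w
  -- the CP data in terms of ρ₁, ρ₂
  have hl₁' : l₁ = (ρ₁.lhs.subst τ₁).rename χ₁ := by
    rw [hl₁]
    have : (ρ₁.lhs.subst τ₁).rename χ₁ = ((ρA.lhs.subst τA).rename π₁).rename χ₁ :=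
      congrArg (Term.rename χ₁) (hsubren1 ρA.lhs)
    rw [this, rename_rename]
    exact rename_congr _ (fun x _ => by simp [hχ₁])
  have hr₁' : r₁ = (ρ₁.rhs.subst τ₁).rename χ₁ := by
    rw [hr₁]
    have : (ρ₁.rhs.subst τ₁).rename χ₁ = ((ρA.rhs.subst τA).rename π₁).rename χ₁ :=
      congrArg (Term.rename χ₁) (hsubren1 ρA.rhs)
    rw [this, rename_rename]
    exact rename_congr _ (fun x _ => by simp [hχ₁])
  have hl₂' : l₂ = (ρ₂.lhs.subst τ₂).rename χ₂ := by
    rw [hl₂]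
    have : (ρ₂.lhs.subst τ₂).rename χ₂ = ((ρB.lhs.subst τB).rename π₂).rename χ₂ :=
      congrArg (Term.rename χ₂) (hsubren2 ρB.lhs)
    rw [this, rename_rename]
    exact rename_congr _ (fun x _ => by simp [hχ₂])
  have hr₂' : r₂ = (ρ₂.rhs.subst τ₂).rename χ₂ := by
    rw [hr₂]
    have : (ρ₂.rhs.subst τ₂).rename χ₂ = ((ρB.rhs.subst τB).rename π₂).rename χ₂ :=
      congrArg (Term.rename χ₂) (hsubren2 ρB.rhs)
    rw [this, rename_rename]
    exact rename_congr _ (fun x _ => by simp [hχ₂])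
  have hl₁ν : l₁ = ρ₁.lhs.subst ν₁ := hl₁'.trans (Term.subst_then_rename _ _ _)
  have hr₁ν : r₁ = ρ₁.rhs.subst ν₁ := hr₁'.trans (Term.subst_then_rename _ _ _)
  have hl₂ν : l₂ = ρ₂.lhs.subst ν₂ := hl₂'.trans (Term.subst_then_rename _ _ _)
  have hr₂ν : r₂ = ρ₂.rhs.subst ν₂ := hr₂'.trans (Term.subst_then_rename _ _ _)
  -- ν₂ is variable-or-value
  have hν₂vv : ∀ y, (∃ z, ν₂ y = Term.var z) ∨ ∃ v ∈ R.Val, ν₂ y = Term.app v [] := by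
    intro y
    by_cases hy : y ∈ LVar ρ₂
    · obtain ⟨v, hv, h⟩ := hτ₂val y hy
      exact Or.inr ⟨v, hv, by simp only [hν₂, h, rename_value]⟩
    · refine Or.inl ⟨χ₂ y, ?_⟩
      simp only [hν₂, hτ₂off y hy, Term.rename, Term.subst_var]
  -- lift the overlap position
  obtain ⟨u, hu, hl2pu⟩ := Term.subtermAt_subst_varval
    (fun y => (hν₂vv y).imp id (fun ⟨v, _, h⟩ => ⟨v, h⟩)) (hl₂ν ▸ hsubp)
  have hufun : u.isFun := by
    cases u with
    | app g us => trivial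
    | var y =>
      exfalso
      rcases hν₂vv y with ⟨z, hz⟩ | ⟨v, hv, hvz⟩
      · rw [hl2pu] at hl2pfun
        simp only [Term.subst_var, hz] at hl2pfun
        exact hl2pfun
      · have hl2pv : l2p = Term.app v [] := by rw [hl2pu, Term.subst_var, hvz]
        have huni : l₁.subst σ = l2p.subst σ := hmgu.1
        rw [hl2pv, subst_value] at huni
        rw [hl₁, hAlhs] at huni
        rw [Term.rename, Term.subst_app, Term.subst_app] at huni
        have : fA = v := by
          have := congrArg (fun w : Term F => match w with
            | Term.app f _ => f | _ => fA) huni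
          simpa using this
        exact hfA (this ▸ hv)
  -- disjointness of the renamed rules
  have hRV1 : ruleVars ρ₁ = π₁ '' ruleVars ρA := by rw [hρ₁]; exact ruleVars_renameRule π₁ ρA
  have hRV2 : ruleVars ρ₂ = π₂ '' ruleVars ρB := by rw [hρ₂]; exact ruleVars_renameRule π₂ ρB
  have hdisjR : ruleVars ρ₁ ∩ ruleVars ρ₂ = ∅ := by
    rw [Set.eq_empty_iff_forall_notMem]
    rintro y ⟨hy1, hy2⟩
    rw [hRV1] at hy1
    rw [hRV2] at hy2
    obtain ⟨a, ha, rfl⟩ := hy1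
    obtain ⟨b, hb, hba⟩ := hy2
    have ha' : a < N := lt_of_lt_of_le (lt_boundR ha) (le_max_left _ _)
    have hb' : b < N := lt_of_lt_of_le (lt_boundR hb) (le_max_right _ _)
    have e1 : π₁ a = 2 * a := by rw [hπ₁]; exact evenPerm_lt ha'
    have e2 : π₂ b = 2 * b + 1 := by rw [hπ₂]; exact oddPerm_lt hb'
    rw [e1, e2] at hba
    omega
  have hdisj' : ∀ y, y ∈ ruleVars ρ₂ → y ∉ ruleVars ρ₁ := by
    intro y hy2 hy1
    have := Set.eq_empty_iff_forall_notMem.mp hdisjR y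
    exact this ⟨hy1, hy2⟩
  -- Θ computations
  have hΘ1 : ∀ w : Term F, (∀ x ∈ w.varsList, x ∈ ruleVars ρ₁) →
      w.subst Θ = (w.subst ν₁).subst σ := by
    intro w hw
    rw [Term.subst_subst]
    refine Term.subst_congr fun x hx => ?_
    simp only [hΘ]
    rw [if_pos (hw x hx)]
  have hΘ2 : ∀ w : Term F, (∀ x ∈ w.varsList, x ∈ ruleVars ρ₂) →
      w.subst Θ = (w.subst ν₂).subst σ := by
    intro w hw
    rw [Term.subst_subst]
    refine Term.subst_congr fun x hx => ?_
    simp only [hΘ]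
    rw [if_neg (hdisj' x (hw x hx))]
  have hl₁Θ : ρ₁.lhs.subst Θ = l₁.subst σ := by
    rw [hΘ1 _ (lhs_varsList_ruleVars ρ₁), ← hl₁ν]
  have hr₁Θ : ρ₁.rhs.subst Θ = r₁.subst σ := by
    rw [hΘ1 _ (rhs_varsList_ruleVars ρ₁), ← hr₁ν]
  have hl₂Θ : ρ₂.lhs.subst Θ = l₂.subst σ := by
    rw [hΘ2 _ (lhs_varsList_ruleVars ρ₂), ← hl₂ν]
  have hr₂Θ : ρ₂.rhs.subst Θ = r₂.subst σ := by
    rw [hΘ2 _ (rhs_varsList_ruleVars ρ₂), ← hr₂ν]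
  have huΘ : u.subst Θ = (u.subst ν₂).subst σ :=
    hΘ2 u (fun x hx => lhs_varsList_ruleVars ρ₂ x (Term.subtermAt_varsList hu x hx))
  have hTuni : ρ₁.lhs.subst Θ = u.subst Θ := by
    rw [hl₁Θ, huΘ, ← hl2pu]
    exact hmgu.1
  -- the constrained mgu
  obtain ⟨σ', hσ'uni, hσ'gen⟩ := exists_mgu' Θ hTuni
  have hfact : ∀ y, (σ' y).subst Θ = Θ y := hσ'gen Θ hTuni
  have hdbl : ∀ w : Term F, (w.subst σ').subst Θ = w.subst Θ := by
    intro w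
    rw [Term.subst_subst]
    exact Term.subst_congr fun x _ => hfact x
  -- Θ gives values on the logical variables
  have hΘval : ∀ y, y ∈ LVar ρ₁ ∨ y ∈ LVar ρ₂ → ∃ v ∈ R.Val, Θ y = Term.app v [] := by
    rintro y (hy | hy)
    · obtain ⟨v, hv, hvy⟩ := hτ₁val y hy
      refine ⟨v, hv, ?_⟩
      simp only [hΘ]
      rw [if_pos (LVar_mem_ruleVars hy)]
      simp only [hν₁, hvy, rename_value, subst_value]
    · obtain ⟨v, hv, hvy⟩ := hτ₂val y hy
      refine ⟨v, hv, ?_⟩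
      simp only [hΘ]
      rw [if_neg (hdisj' y (LVar_mem_ruleVars hy))]
      simp only [hν₂, hvy, rename_value, subst_value]
  have hvv : ∀ x ∈ LVar ρ₁ ∪ LVar ρ₂, R.isVal (σ' x) ∨ ∃ y, σ' x = Term.var y := by
    intro x hx
    obtain ⟨v, hv, hΘx⟩ := hΘval x hx
    have h1 := hfact x
    rw [hΘx] at h1
    rcases subst_value_eq h1 with ⟨y, hy⟩ | hval
    · exact Or.inr ⟨y, hy⟩
    · exact Or.inl ⟨v, hv, hval⟩
  -- ground conditions
  have hc₁Θ : ρ₁.cond.subst Θ = ρA.cond.subst τA := by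
    calc ρ₁.cond.subst Θ = (ρ₁.cond.subst ν₁).subst σ := hΘ1 _ (cond_varsList_ruleVars ρ₁)
    _ = ((ρ₁.cond.subst τ₁).rename χ₁).subst σ := by
        rw [(Term.subst_then_rename ρ₁.cond τ₁ χ₁).symm]
    _ = (((ρA.cond.subst τA).rename π₁).rename χ₁).subst σ :=
        congrArg (fun w : Term F => (w.rename χ₁).subst σ) (hsubren1 ρA.cond)
    _ = ρA.cond.subst τA := by
        rw [Term.rename_ground hAg, Term.rename_ground hAg, Term.subst_ground hAg]
  have hc₂Θ : ρ₂.cond.subst Θ = ρB.cond.subst τB := by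
    calc ρ₂.cond.subst Θ = (ρ₂.cond.subst ν₂).subst σ := hΘ2 _ (cond_varsList_ruleVars ρ₂)
    _ = ((ρ₂.cond.subst τ₂).rename χ₂).subst σ := by
        rw [(Term.subst_then_rename ρ₂.cond τ₂ χ₂).symm]
    _ = (((ρB.cond.subst τB).rename π₂).rename χ₂).subst σ :=
        congrArg (fun w : Term F => (w.rename χ₂).subst σ) (hsubren2 ρB.cond)
    _ = ρB.cond.subst τB := by
        rw [Term.rename_ground hBg, Term.rename_ground hBg, Term.subst_ground hBg]
  -- logicality of the instantiated conditions
  have hτAlog : ∀ x, IsLogical R.Fth (τA x) := by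
    intro x
    by_cases hx : x ∈ LVar ρA
    · obtain ⟨v, hv, h⟩ := hAval x hx
      rw [h]
      exact IsLogical.app (hwf.val_sub hv) (by simp)
    · rw [hAoff x hx]; exact IsLogical.var x
  have hτBlog : ∀ x, IsLogical R.Fth (τB x) := by
    intro x
    by_cases hx : x ∈ LVar ρB
    · obtain ⟨v, hv, h⟩ := hBval x hx
      rw [h]
      exact IsLogical.app (hwf.val_sub hv) (by simp)
    · rw [hBoff x hx]; exact IsLogical.var x
  have hcAτlog : IsLogical R.Fth (ρA.cond.subst τA) := LCTRS.IsLogical_subst hAlog hτAlog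
  have hcBτlog : IsLogical R.Fth (ρB.cond.subst τB) := LCTRS.IsLogical_subst hBlog hτBlog
  -- EC facts
  have hEC : ∀ (ρ : Rule F), (∀ y ∈ LVar ρ, ∃ v ∈ R.Val, Θ y = Term.app v []) →
      IsLogical R.Fth ((R.EC ρ).subst Θ) ∧ LCTRS.Ground ((R.EC ρ).subst Θ) ∧
        R.J ((R.EC ρ).subst Θ) = R.tt := by
    intro ρ hvals
    rw [LCTRS.EC, LCTRS.bigConj_subst, List.map_map]
    apply LCTRS.bigConj_true hwf
    intro a ha
    rw [List.mem_map] at ha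
    obtain ⟨x, hx, rfl⟩ := ha
    obtain ⟨v, hv, hΘx⟩ := hvals x (EVarList_mem_LVar hx)
    have ha' : (Term.subst Θ ∘ fun x => Term.app R.eqS [Term.var x, Term.var x]) x
        = Term.app R.eqS [Term.app v [], Term.app v []] := by
      simp only [Function.comp, Term.subst_app, List.map_cons, List.map_nil,
        Term.subst_var, hΘx]
    rw [ha']
    have hlog : IsLogical R.Fth (Term.app v [] : Term F) :=
      IsLogical.app (hwf.val_sub hv) (by simp)
    have hgr : LCTRS.Ground (Term.app v [] : Term F) := by simp [LCTRS.Ground]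
    refine ⟨?_, ?_, ?_⟩
    · refine IsLogical.app hwf.eqS_mem.1 ?_
      intro w hw
      rcases List.mem_cons.mp hw with rfl | hw
      · exact hlog
      rcases List.mem_cons.mp hw with rfl | hw
      · exact hlog
      · simp at hw
    · simp [LCTRS.Ground]
    · exact (hwf.eq_iff _ _ hlog hlog hgr hgr).mpr rfl
  obtain ⟨hE1log, hE1gr, hE1J⟩ := hEC ρ₁ (fun y hy => hΘval y (Or.inl hy))
  obtain ⟨hE2log, hE2gr, hE2J⟩ := hEC ρ₂ (fun y hy => hΘval y (Or.inr hy))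
  -- the constraint of the constrained critical pair
  have hφ'Θ : (R.conj (ρ₁.cond.subst σ') (R.conj (ρ₂.cond.subst σ')
        ((R.conj (R.EC ρ₁) (R.EC ρ₂)).subst σ'))).subst Θ =
      R.conj (ρA.cond.subst τA) (R.conj (ρB.cond.subst τB)
        (R.conj ((R.EC ρ₁).subst Θ) ((R.EC ρ₂).subst Θ))) := by
    simp only [LCTRS.conj_subst, hdbl, hc₁Θ, hc₂Θ]
  have hEClog := LCTRS.conj_logical hwf hE1log hE2log
  have hECgr := LCTRS.conj_ground (R := R) hE1gr hE2gr
  have hECJ := (hwf.conj_iff _ _ hE1log hE2log hE1gr hE2gr).mpr ⟨hE1J, hE2J⟩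
  have hInlog := LCTRS.conj_logical hwf hcBτlog hEClog
  have hIngr := LCTRS.conj_ground (R := R) hBg hECgr
  have hInJ := (hwf.conj_iff _ _ hcBτlog hEClog hBg hECgr).mpr ⟨hBJ, hECJ⟩
  have hAllgr := LCTRS.conj_ground (R := R) hAg hIngr
  have hAllJ := (hwf.conj_iff _ _ hcAτlog hInlog hAg hIngr).mpr ⟨hAJ, hInJ⟩
  have hvalidC : R.validC ((R.conj (ρ₁.cond.subst σ') (R.conj (ρ₂.cond.subst σ')
      ((R.conj (R.EC ρ₁) (R.EC ρ₂)).subst σ'))).subst Θ) := by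
    rw [hφ'Θ]
    exact R.validC_of_ground hAllgr hAllJ
  -- value assignment
  have hkey : ∀ (w : Term F), (∀ z ∈ w.varsList, z ∈ LVar ρ₁ ∨ z ∈ LVar ρ₂) →
      ∀ x, x ∈ (w.subst σ').varsList → R.isVal (Θ x) := by
    intro w hw x hxw
    rw [Term.mem_vars_subst] at hxw
    obtain ⟨z, hz, hxz⟩ := hxw
    obtain ⟨v, hv, hΘz⟩ := hΘval z (hw z hz)
    have h1 := hfact z
    rw [hΘz] at h1
    rcases subst_value_eq h1 with ⟨y, hy⟩ | hval
    · rw [hy] at hxz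
      simp only [Term.varsList_var, List.mem_singleton] at hxz
      subst hxz
      refine ⟨v, hv, ?_⟩
      have h2 : (σ' z).subst Θ = Θ x := by rw [hy, Term.subst_var]
      rw [← h2, h1]
    · rw [hval] at hxz
      simp at hxz
  have hECvars : ∀ z ∈ (R.conj (R.EC ρ₁) (R.EC ρ₂)).varsList,
      z ∈ LVar ρ₁ ∨ z ∈ LVar ρ₂ := by
    intro z hz
    rw [LCTRS.varsList_conj, List.mem_append] at hz
    rcases hz with hz | hz
    · exact Or.inl (LCTRS.EC_varsList_subset R ρ₁ z hz)
    · exact Or.inr (LCTRS.EC_varsList_subset R ρ₂ z hz)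
  have hvalassign : ∀ x ∈ (R.conj (ρ₁.cond.subst σ') (R.conj (ρ₂.cond.subst σ')
      ((R.conj (R.EC ρ₁) (R.EC ρ₂)).subst σ'))).vars, R.isVal (Θ x) := by
    intro x hx
    have hx' : x ∈ (R.conj (ρ₁.cond.subst σ') (R.conj (ρ₂.cond.subst σ')
      ((R.conj (R.EC ρ₁) (R.EC ρ₂)).subst σ'))).varsList := hx
    rw [LCTRS.varsList_conj, LCTRS.varsList_conj, List.mem_append, List.mem_append] at hx'
    rcases hx' with h | h | h
    · exact hkey ρ₁.cond (fun z hz => Or.inl (cond_vars_subset_LVar ρ₁ hz)) x h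
    · exact hkey ρ₂.cond (fun z hz => Or.inr (cond_vars_subset_LVar ρ₂ hz)) x h
    · exact hkey (R.conj (R.EC ρ₁) (R.EC ρ₂)) hECvars x h
  -- satisfiability
  have hsat : R.satC (R.conj (ρ₁.cond.subst σ') (ρ₂.cond.subst σ')) := by
    refine ⟨Θ, ?_, ?_⟩
    · intro x hx
      have hx' : x ∈ (R.conj (ρ₁.cond.subst σ') (ρ₂.cond.subst σ')).varsList := hx
      rw [LCTRS.varsList_conj, List.mem_append] at hx'
      rcases hx' with h | h
      · exact hkey ρ₁.cond (fun z hz => Or.inl (cond_vars_subset_LVar ρ₁ hz)) x h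
      · exact hkey ρ₂.cond (fun z hz => Or.inr (cond_vars_subset_LVar ρ₂ hz)) x h
    · rw [LCTRS.conj_subst, hdbl, hdbl, hc₁Θ, hc₂Θ]
      exact (hwf.conj_iff _ _ hcAτlog hcBτlog hAg hBg).mpr ⟨hAJ, hBJ⟩
  -- root condition
  have hroot' : p = [] → ¬ IsVariantR ρ₁ ρ₂ ∨ ¬ (ρ₁.rhs.vars ⊆ ρ₁.lhs.vars) := by
    intro hp
    by_contra hcon
    push_neg at hcon
    obtain ⟨⟨πᵥ, hv1, hv2, hv3⟩, hsubvars⟩ := hcon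
    subst hp
    have hue : u = ρ₂.lhs := by
      rw [Term.subtermAt_nil] at hu
      exact (Option.some_inj.mp hu).symm
    have hpt : ∀ x ∈ ρ₁.lhs.varsList, Θ x = Θ (πᵥ x) := by
      have h1 : ρ₁.lhs.subst Θ = (ρ₁.lhs.rename πᵥ).subst Θ := by
        rw [← hv1, ← hue]; exact hTuni
      rw [Term.rename_then_subst] at h1
      exact Term.subst_eq_pointwise h1
    have hLV2v : LVar ρ₂ = πᵥ '' LVar ρ₁ := by
      have hρeq : ρ₂ = renameRule πᵥ ρ₁ := by
        calc ρ₂ = ⟨ρ₂.lhs, ρ₂.rhs, ρ₂.cond⟩ := rfl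
        _ = renameRule πᵥ ρ₁ := by rw [hv1, hv2, hv3]; rfl
      rw [hρeq]; exact LVar_renameRule πᵥ ρ₁
    set κ : ℕ ≃ ℕ := χ₁.symm.trans (πᵥ.trans χ₂) with hκ
    have hmid : ∀ (w : Term F), (∀ x ∈ w.varsList, x ∈ ρ₁.lhs.varsList) →
        (w.subst τ₁).rename πᵥ = (w.rename πᵥ).subst τ₂ := by
      intro w hw
      rw [Term.subst_then_rename, Term.rename_then_subst]
      refine Term.subst_congr fun x hx => ?_
      have hxl : x ∈ ρ₁.lhs.varsList := hw x hx
      by_cases hxL : x ∈ LVar ρ₁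
      · obtain ⟨v, hv, h1⟩ := hτ₁val x hxL
        have hπL : πᵥ x ∈ LVar ρ₂ := by rw [hLV2v]; exact ⟨x, hxL, rfl⟩
        obtain ⟨v', hv', h2⟩ := hτ₂val _ hπL
        rw [h1, h2, rename_value]
        have e1 : Θ x = Term.app v [] := by
          simp only [hΘ]
          rw [if_pos (lhs_varsList_ruleVars ρ₁ x hxl)]
          simp only [hν₁, h1, rename_value, subst_value]
        have e2 : Θ (πᵥ x) = Term.app v' [] := by
          simp only [hΘ]
          rw [if_neg (hdisj' _ (LVar_mem_ruleVars hπL))]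
          simp only [hν₂, h2, rename_value, subst_value]
        have e3 := hpt x hxl
        rw [e1, e2] at e3
        injection e3 with e3 _
        rw [e3]
      · rw [hτ₁off x hxL]
        have hπL : πᵥ x ∉ LVar ρ₂ := by
          rw [hLV2v]
          rintro ⟨z, hz, hzx⟩
          exact hxL (by rwa [← πᵥ.injective hzx])
        rw [hτ₂off _ hπL]
        simp only [Term.rename, Term.subst_var]
    have hXeq : ∀ (w : Term F), (∀ x ∈ w.varsList, x ∈ ρ₁.lhs.varsList) →
        ((w.subst τ₁).rename χ₁).rename κ = ((w.rename πᵥ).subst τ₂).rename χ₂ := by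
      intro w hw
      calc ((w.subst τ₁).rename χ₁).rename κ
          = (w.subst τ₁).rename (fun x => κ (χ₁ x)) := rename_rename _ _ _
        _ = (w.subst τ₁).rename (fun x => χ₂ (πᵥ x)) :=
            rename_congr _ (fun x _ => by simp [hκ])
        _ = ((w.subst τ₁).rename πᵥ).rename χ₂ := (rename_rename _ _ _).symm
        _ = ((w.rename πᵥ).subst τ₂).rename χ₂ := by rw [hmid w hw]
    refine hrootCP rfl ⟨κ, ?_, ?_⟩
    · show l₂ = l₁.rename κ
      rw [hl₂', hv1, hl₁']
      exact (hXeq ρ₁.lhs (fun x hx => hx)).symm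
    · show r₂ = r₁.rename κ
      rw [hr₂', hv2, hr₁']
      exact (hXeq ρ₁.rhs (fun x hx => hsubvars hx)).symm
  -- the replaced term
  have hsub' : (ρ₂.lhs.subst σ').subtermAt p = some (u.subst σ') :=
    Term.subtermAt_subst σ' hu
  obtain ⟨s', hs'⟩ := Term.replaceAt_exists hsub' (ρ₁.rhs.subst σ')
  have hsΘ : s'.subst Θ = s := by
    have h1 := Term.replaceAt_subst Θ hs'
    rw [hdbl, hdbl, hl₂Θ, hr₁Θ, hrepl] at h1
    exact (Option.some_inj.mp h1).symm
  have htΘ : (ρ₂.rhs.subst σ').subst Θ = t := by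
    rw [hdbl, hr₂Θ, ← ht]
  exact ⟨p, s', ρ₂.rhs.subst σ',
    R.conj (ρ₁.cond.subst σ') (R.conj (ρ₂.cond.subst σ')
      ((R.conj (R.EC ρ₁) (R.EC ρ₂)).subst σ')), Θ,
    ⟨ρ₁, ρ₂, σ', u, ⟨ρA, hρA, by rw [hρ₁]; exact isVariantR_renameRule π₁ ρA⟩,
      ⟨ρB, hρB, by rw [hρ₂]; exact isVariantR_renameRule π₂ ρB⟩,
      hdisjR, hu, hufun, ⟨hσ'uni, fun θ hθ => ⟨θ, hσ'gen θ hθ⟩⟩, hvv, hsat, hroot',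
      hs', rfl, rfl⟩,
    hsΘ.symm, htΘ.symm, hvalassign, hvalidC⟩

end LCT
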